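/- arXiv:1307.2937 — 5 statements merged into one kernel-verified Lean document; each statement's English description precedes it below -/
import Mathlib

section
/- Let R be a strict p-ring, S a p-adically complete ring, and t: R/(p) → S a multiplicative map whose composition with the projection S → S/(p) is a ring homomorphism. Then the map T sending Σ p^n [x̄_n] to Σ p^n t(x̄_n) is a p-adically continuous ring homomorphism R → S with T ∘ [·] = t. -/
open MvPolynomial in
lemma tei_poly (p : ℕ) (hp : p.Prime) :
    ∃ g : MvPolynomial (Fin 3) ℤ,
      (X 0 + X 1 + C (p:ℤ) * X 2)^p = X 0^p + X 1^p + C (p:ℤ) * g := by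
  haveI : Fact p.Prime := ⟨hp⟩
  have hdvd : (C (p:ℤ) : MvPolynomial (Fin 3) ℤ) ∣
      (X 0 + X 1 + C (p:ℤ) * X 2)^p - X 0^p - X 1^p := by
    rw [MvPolynomial.C_dvd_iff_dvd_coeff]
    intro i
    have h0 : MvPolynomial.map (Int.castRingHom (ZMod p))
        ((X 0 + X 1 + C (p:ℤ) * X 2)^p - X 0^p - X 1^p : MvPolynomial (Fin 3) ℤ) = 0 := by
      have hc : ((p:ℤ) : ZMod p) = 0 := by simp
      simp only [map_sub, map_pow, map_add, map_mul, MvPolynomial.map_X, MvPolynomial.map_C,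
        eq_intCast, map_intCast, map_natCast, Int.cast_natCast, CharP.cast_eq_zero, map_zero,
        zero_mul, add_zero, zero_pow, hp.ne_zero, ne_eq, not_false_iff]
      rw [add_pow_char]
      ring
    have := congrArg (fun q => MvPolynomial.coeff i q) h0
    simp only [MvPolynomial.coeff_map, MvPolynomial.coeff_zero] at this
    exact_mod_cast (ZMod.intCast_zmod_eq_zero_iff_dvd _ p).mp this
  obtain ⟨g, hg⟩ := hdvd
  exact ⟨g, by linear_combination hg⟩

lemma pow_p_cong {A : Type*} [CommRing A] {p : ℕ} {a b d : A}
    (h1 : (p:A) ∣ a - b) (hn : d ∣ a - b) : (p:A) * d ∣ a^p - b^p := by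
  rw [← geom_sum₂_mul a b p]
  refine mul_dvd_mul ?_ hn
  have h2 : (p:A) ∣ (∑ i ∈ Finset.range p, a^i * b^(p-1-i)) -
      ∑ i ∈ Finset.range p, b^(p-1) := by
    rw [← Finset.sum_sub_distrib]
    refine Finset.dvd_sum fun i hi => ?_
    have hi' : i + (p-1-i) = p - 1 := by
      have := Finset.mem_range.mp hi; omega
    have he : a^i * b^(p-1-i) - b^(p-1) = (a^i - b^i) * b^(p-1-i) := by
      rw [sub_mul, ← pow_add, hi']
    rw [he]
    exact (h1.trans (sub_dvd_pow_sub_pow a b i)).mul_right _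
  have h3 : (p:A) ∣ ∑ i ∈ Finset.range p, b^(p-1) := by
    rw [Finset.sum_const, Finset.card_range, nsmul_eq_mul]
    exact Dvd.intro _ rfl
  have := dvd_add h2 h3
  simpa using this


section Approx
variable {R S : Type*} [CommRing R] [CommRing S] {F : R → S} {d : S}

lemma apx_zero (hadd : ∀ a b, d ∣ F (a+b) - (F a + F b)) : d ∣ F 0 := by
  have h := hadd 0 0
  rw [add_zero] at h
  obtain ⟨c, hc⟩ := h
  exact ⟨-c, by linear_combination -hc⟩

lemma apx_add (hadd : ∀ a b, d ∣ F (a+b) - (F a + F b)) {a b : R} {a' b' : S}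
    (ha : d ∣ F a - a') (hb : d ∣ F b - b') : d ∣ F (a+b) - (a'+b') := by
  obtain ⟨c1, h1⟩ := hadd a b
  obtain ⟨c2, h2⟩ := ha
  obtain ⟨c3, h3⟩ := hb
  exact ⟨c1+c2+c3, by linear_combination h1+h2+h3⟩

lemma apx_neg (hadd : ∀ a b, d ∣ F (a+b) - (F a + F b)) {a : R} {a' : S}
    (ha : d ∣ F a - a') : d ∣ F (-a) - (-a') := by
  obtain ⟨c0, h0⟩ := apx_zero hadd
  obtain ⟨c1, h1⟩ := hadd a (-a)
  obtain ⟨c2, h2⟩ := ha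
  rw [add_neg_cancel] at h1
  exact ⟨c0 - c1 - c2, by linear_combination h0 - h1 - h2⟩

lemma apx_sub (hadd : ∀ a b, d ∣ F (a+b) - (F a + F b)) {a b : R} {a' b' : S}
    (ha : d ∣ F a - a') (hb : d ∣ F b - b') : d ∣ F (a-b) - (a'-b') := by
  have := apx_add hadd ha (apx_neg hadd hb)
  rw [← sub_eq_add_neg, ← sub_eq_add_neg] at this
  exact this

lemma apx_mul (hmul : ∀ a b, d ∣ F (a*b) - F a * F b) {a b : R} {a' b' : S}
    (ha : d ∣ F a - a') (hb : d ∣ F b - b') : d ∣ F (a*b) - (a'*b') := by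
  obtain ⟨c1, h1⟩ := hmul a b
  obtain ⟨c2, h2⟩ := ha
  obtain ⟨c3, h3⟩ := hb
  exact ⟨c1 + F a * c3 + b' * c2, by linear_combination h1 + F a * h3 + b' * h2⟩

omit [CommRing R] in
lemma apx_self {a : R} : d ∣ F a - F a := by simp

lemma apx_pow (hmul : ∀ a b, d ∣ F (a*b) - F a * F b) (hone : d ∣ F 1 - 1)
    {a : R} {a' : S} (ha : d ∣ F a - a') : ∀ m : ℕ, d ∣ F (a^m) - a'^m := by
  intro m
  induction m with
  | zero => simpa using hone
  | succ m ih =>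
    rw [pow_succ, pow_succ]
    exact apx_mul hmul ih ha

lemma apx_nat (hadd : ∀ a b, d ∣ F (a+b) - (F a + F b)) (hone : d ∣ F 1 - 1) :
    ∀ m : ℕ, d ∣ F (m:R) - (m:S) := by
  intro m
  induction m with
  | zero => simpa using apx_zero hadd
  | succ m ih =>
    push_cast
    exact apx_add hadd ih hone

lemma apx_int (hadd : ∀ a b, d ∣ F (a+b) - (F a + F b)) (hone : d ∣ F 1 - 1) :
    ∀ z : ℤ, d ∣ F (z:R) - (z:S) := by
  intro z
  induction z using Int.induction_on with
  | zero => simpa using apx_zero hadd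
  | succ i ih =>
    have e1 : ((i+1:ℤ) : R) = ((i:ℤ) : R) + 1 := by push_cast; ring
    have e2 : ((i+1:ℤ) : S) = ((i:ℤ) : S) + 1 := by push_cast; ring
    rw [e1, e2]
    exact apx_add hadd ih hone
  | pred i ih =>
    have h1 := hadd ((-i-1 : ℤ) : R) 1
    obtain ⟨c1, hc1⟩ : d ∣ F ((-i : ℤ) : R) - (F ((-i-1:ℤ) : R) + F 1) := by
      have e : ((-i-1:ℤ) : R) + 1 = ((-i : ℤ) : R) := by push_cast; ring
      rwa [e] at h1
    obtain ⟨c2, hc2⟩ := ih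
    obtain ⟨c3, hc3⟩ := hone
    refine ⟨c2 - c1 - c3, ?_⟩
    push_cast at *
    linear_combination hc2 - hc1 - hc3

lemma apx_aeval (hadd : ∀ a b, d ∣ F (a+b) - (F a + F b))
    (hmul : ∀ a b, d ∣ F (a*b) - F a * F b) (hone : d ∣ F 1 - 1)
    {σ : Type*} (g : MvPolynomial σ ℤ) (v : σ → R) (w : σ → S)
    (hv : ∀ i, d ∣ F (v i) - w i) :
    d ∣ F (MvPolynomial.aeval v g) - MvPolynomial.aeval w g := by
  induction g using MvPolynomial.induction_on with
  | C z =>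
    simp only [eq_intCast, map_intCast]
    exact apx_int hadd hone z
  | add f g hf hg =>
    simp only [map_add]
    exact apx_add hadd hf hg
  | mul_X f i hf =>
    simp only [map_mul, MvPolynomial.aeval_X]
    exact apx_mul hmul hf (hv i)

end Approx

def teiSeq (p : ℕ) {R S : Type*} [CommRing R] [CommRing S] (Y Rr : R → R) (t0 : R → S) :
    ℕ → R → S
  | 0 => t0
  | n+1 => fun x => (teiSeq p Y Rr t0 n (Y x))^p + (p:S) * teiSeq p Y Rr t0 n (Rr x)


set_option maxHeartbeats 1000000 in
/-- Let `R` be a strict `p`-ring (a `p`-torsion-free, `p`-adically complete ring whose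
quotient `R/(p)` is perfect of characteristic `p`), with Teichmüller section
`τ : R/(p) → R`.  Let `S` be a `p`-adically complete ring and `t : R/(p) → S` a
multiplicative map whose composition with the projection `S → S/(p)` is a ring
homomorphism.  Then there is a unique `p`-adically continuous ring homomorphism
`T : R → S` (sending `Σ pⁿ [x̄ₙ]` to `Σ pⁿ t(x̄ₙ)`) with `T ∘ τ = t`. -/
theorem teichmuller_hom (p : ℕ) [Fact p.Prime]
    (R : Type*) [CommRing R]
    (htf : ∀ x : R, (p : R) * x = 0 → x = 0)
    [IsAdicComplete (Ideal.span {(p : R)}) R]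
    [CharP (R ⧸ Ideal.span {(p : R)}) p]
    [PerfectRing (R ⧸ Ideal.span {(p : R)}) p]
    (τ : (R ⧸ Ideal.span {(p : R)}) →* R)
    (hτ : ∀ x, Ideal.Quotient.mk (Ideal.span {(p : R)}) (τ x) = x)
    (S : Type*) [CommRing S] [IsAdicComplete (Ideal.span {(p : S)}) S]
    (t : (R ⧸ Ideal.span {(p : R)}) →* S)
    (ht : ∀ x y, Ideal.Quotient.mk (Ideal.span {(p : S)}) (t (x + y)) =
      Ideal.Quotient.mk (Ideal.span {(p : S)}) (t x) +
      Ideal.Quotient.mk (Ideal.span {(p : S)}) (t y)) :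
    ∃! T : R →+* S,
      (∀ x, T (τ x) = t x) ∧
      (∀ n : ℕ, ∃ m : ℕ, ∀ x : R, (p : R) ^ m ∣ x → (p : S) ^ n ∣ T x) := by
  classical
  have hp : p.Prime := Fact.out
  let mk : R →+* R ⧸ Ideal.span {(p : R)} := Ideal.Quotient.mk _
  let φi : (R ⧸ Ideal.span {(p : R)}) ≃+* (R ⧸ Ideal.span {(p : R)}) :=
    (frobeniusEquiv (R ⧸ Ideal.span {(p : R)}) p).symm
  have hfr : ∀ a : R ⧸ Ideal.span {(p : R)}, (φi a)^p = a := by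
    intro a
    have h := (frobeniusEquiv (R ⧸ Ideal.span {(p : R)}) p).apply_symm_apply a
    rwa [frobeniusEquiv_apply, frobenius_def] at h
  have hdvdR : ∀ x : R, mk x = 0 → (p:R) ∣ x := fun x hx =>
    Ideal.mem_span_singleton.mp (Ideal.Quotient.eq_zero_iff_mem.mp hx)
  have hdvdS : ∀ s : S, Ideal.Quotient.mk (Ideal.span {(p : S)}) s = 0 → (p:S) ∣ s := fun s hs =>
    Ideal.mem_span_singleton.mp (Ideal.Quotient.eq_zero_iff_mem.mp hs)
  let Y : R → R := fun x => τ (φi (mk x))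
  have hmkY : ∀ x, mk (Y x) = φi (mk x) := fun x => hτ _
  have hYpow : ∀ x, mk (Y x ^ p) = mk x := by
    intro x; rw [map_pow, hmkY, hfr]
  have hrex : ∀ x : R, ∃ c, x - Y x ^ p = (p:R) * c := by
    intro x
    exact hdvdR _ (by rw [map_sub, hYpow, sub_self])
  let Rr : R → R := fun x => (hrex x).choose
  have hr : ∀ x, x - Y x ^ p = (p:R) * Rr x := fun x => (hrex x).choose_spec
  have hsex : ∀ x y : R, ∃ c, Y (x+y) - (Y x + Y y) = (p:R) * c := by
    intro x y
    refine hdvdR _ ?_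
    rw [map_sub, map_add, hmkY, hmkY, hmkY, map_add, map_add]
    ring
  let sF : R → R → R := fun x y => (hsex x y).choose
  have hs : ∀ x y, Y (x+y) = Y x + Y y + (p:R) * sF x y := by
    intro x y
    have h := (hsex x y).choose_spec
    linear_combination h
  obtain ⟨g, hg⟩ := tei_poly p hp
  have hgevR : ∀ a b c : R,
      (a + b + (p:R)*c)^p = a^p + b^p + (p:R) * (MvPolynomial.aeval ![a,b,c] g) := by
    intro a b c
    have h := congrArg (MvPolynomial.aeval (![a,b,c] : Fin 3 → R)) hg
    simpa [map_pow, map_add, map_mul, algebraMap_int_eq, eq_intCast, Int.cast_natCast] using h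
  have hgevS : ∀ a b c : S,
      (a + b + (p:S)*c)^p = a^p + b^p + (p:S) * (MvPolynomial.aeval ![a,b,c] g) := by
    intro a b c
    have h := congrArg (MvPolynomial.aeval (![a,b,c] : Fin 3 → S)) hg
    simpa [map_pow, map_add, map_mul, algebraMap_int_eq, eq_intCast, Int.cast_natCast] using h
  let T0 : R → S := fun x => t (mk x)
  let TS : ℕ → R → S := teiSeq p Y Rr T0
  have hTS0 : ∀ x, TS 0 x = t (mk x) := fun x => rfl
  have hTSs : ∀ n x, TS (n+1) x = (TS n (Y x))^p + (p:S) * TS n (Rr x) := fun n x => rfl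
  have key : ∀ n : ℕ,
      (∀ a b : R, (p:S)^(n+1) ∣ TS n (a+b) - (TS n a + TS n b)) ∧
      (∀ a b : R, (p:S)^(n+1) ∣ TS n (a*b) - TS n a * TS n b) ∧
      ((p:S)^(n+1) ∣ TS n 1 - 1) := by
    intro n
    induction n with
    | zero =>
      refine ⟨?_, ?_, ?_⟩
      · intro a b
        rw [pow_one, hTS0, hTS0, hTS0]
        refine hdvdS _ ?_
        rw [map_sub, map_add, ht, map_add]
        ring
      · intro a b
        rw [hTS0, hTS0, hTS0, show mk (a*b) = mk a * mk b from map_mul mk a b, map_mul]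
        simp
      · rw [hTS0, show mk (1:R) = 1 from map_one mk, map_one]
        simp
    | succ n ih =>
      obtain ⟨ha, hm, h1⟩ := ih
      have hpd : (p:S) ∣ (p:S)^(n+1) := dvd_pow_self _ (Nat.succ_ne_zero n)
      have hcast : ∀ {u v : S}, (p:S)^(n+1) ∣ u - v → (p:S)^(n+2) ∣ u^p - v^p := by
        intro u v h
        have h2 := pow_p_cong (hpd.trans h) h
        rwa [show (p:S) * (p:S)^(n+1) = (p:S)^(n+2) by ring] at h2
      refine ⟨?_, ?_, ?_⟩
      · intro a b
        have hYc : (p:S)^(n+1) ∣ TS n (Y (a+b)) -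
            (TS n (Y a) + TS n (Y b) + (p:S) * TS n (sF a b)) := by
          rw [hs a b]
          exact apx_add ha (apx_add ha apx_self apx_self)
            (apx_mul hm (apx_nat ha h1 p) apx_self)
        have hrab : Rr (a+b) = Rr a + Rr b - MvPolynomial.aeval ![Y a, Y b, sF a b] g := by
          have h1' := hr (a+b)
          rw [hs a b] at h1'
          have h0 := htf (Rr (a+b) - (Rr a + Rr b - MvPolynomial.aeval ![Y a, Y b, sF a b] g))
            (by linear_combination hr a + hr b - h1' - hgevR (Y a) (Y b) (sF a b))
          linear_combination h0
        have hrc : (p:S)^(n+1) ∣ TS n (Rr (a+b)) -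
            (TS n (Rr a) + TS n (Rr b) -
              MvPolynomial.aeval ![TS n (Y a), TS n (Y b), TS n (sF a b)] g) := by
          rw [hrab]
          refine apx_sub ha (apx_add ha apx_self apx_self) ?_
          refine apx_aeval ha hm h1 g _ _ ?_
          intro i
          fin_cases i <;> simpa using apx_self
        obtain ⟨c1, hc1⟩ := hcast hYc
        obtain ⟨c2, hc2⟩ := hrc
        refine ⟨c1 + c2, ?_⟩
        rw [hTSs, hTSs, hTSs]
        linear_combination hc1 + (p:S) * hc2 +
          hgevS (TS n (Y a)) (TS n (Y b)) (TS n (sF a b))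
      · intro a b
        have hYm : Y (a*b) = Y a * Y b := by
          show τ (φi (mk (a*b))) = τ (φi (mk a)) * τ (φi (mk b))
          rw [map_mul, map_mul, map_mul]
        have hrm : Rr (a*b) = Y a^p * Rr b + Y b^p * Rr a + (p:R) * (Rr a * Rr b) := by
          have h1' := hr (a*b)
          rw [hYm] at h1'
          have h0 := htf (Rr (a*b) - (Y a^p * Rr b + Y b^p * Rr a + (p:R) * (Rr a * Rr b)))
            (by linear_combination b * hr a + (Y a ^ p + (p:R) * Rr a) * hr b - h1')
          linear_combination h0
        have hYc : (p:S)^(n+1) ∣ TS n (Y (a*b)) - TS n (Y a) * TS n (Y b) := by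
          rw [hYm]; exact hm _ _
        have hrc : (p:S)^(n+1) ∣ TS n (Rr (a*b)) -
            (TS n (Y a)^p * TS n (Rr b) + TS n (Y b)^p * TS n (Rr a) +
              (p:S) * (TS n (Rr a) * TS n (Rr b))) := by
          rw [hrm]
          exact apx_add ha
            (apx_add ha (apx_mul hm (apx_pow hm h1 apx_self p) apx_self)
              (apx_mul hm (apx_pow hm h1 apx_self p) apx_self))
            (apx_mul hm (apx_nat ha h1 p) (apx_mul hm apx_self apx_self))
        obtain ⟨c1, hc1⟩ := hcast hYc
        obtain ⟨c2, hc2⟩ := hrc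
        refine ⟨c1 + c2, ?_⟩
        rw [hTSs, hTSs, hTSs]
        linear_combination hc1 + (p:S) * hc2
      · have hY1 : Y 1 = 1 := by
          show τ (φi (mk 1)) = 1
          rw [map_one, map_one, map_one]
        have hr1 : Rr 1 = 0 := by
          have h1' := hr 1
          rw [hY1, one_pow, sub_self] at h1'
          exact htf _ h1'.symm
        obtain ⟨c1, hc1⟩ := hcast h1
        obtain ⟨c2, hc2⟩ := apx_zero ha
        refine ⟨c1 + c2, ?_⟩
        rw [hTSs, hY1, hr1]
        linear_combination hc1 + (p:S) * hc2
  have hcomp : ∀ n x, (p:S)^(n+1) ∣ TS (n+1) x - TS n x := by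
    intro n
    induction n with
    | zero =>
      intro x
      have hYx : (mk (Y x))^p = mk x := by rw [hmkY, hfr]
      have he : (t (mk (Y x)))^p = t (mk x) := by rw [← map_pow, hYx]
      rw [hTSs, hTS0, hTS0, hTS0, pow_one, he]
      exact ⟨t (mk (Rr x)), by ring⟩
    | succ n ih =>
      intro x
      rw [hTSs (n+1) x, hTSs n x]
      have hpd : (p:S) ∣ (p:S)^(n+1) := dvd_pow_self _ (Nat.succ_ne_zero n)
      obtain ⟨c1, hc1⟩ := pow_p_cong (hpd.trans (ih (Y x))) (ih (Y x))
      obtain ⟨c2, hc2⟩ := ih (Rr x)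
      exact ⟨c1 + c2, by linear_combination hc1 + (p:S) * hc2⟩
  have hchain : ∀ m n x, n ≤ m → (p:S)^n ∣ TS n x - TS m x := by
    intro m
    induction m with
    | zero =>
      intro n x hn
      obtain rfl : n = 0 := Nat.le_zero.mp hn
      simp
    | succ m ih =>
      intro n x hn
      rcases eq_or_lt_of_le hn with h | h
      · rw [h]; simp
      · have hnm : n ≤ m := Nat.lt_succ_iff.mp h
        obtain ⟨c1, hc1⟩ := ih n x hnm
        obtain ⟨c2, hc2⟩ := (pow_dvd_pow (p:S) hn).trans (hcomp m x)
        exact ⟨c1 - c2, by linear_combination hc1 - hc2⟩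
  have hsmod : ∀ (n : ℕ) (u v : S),
      (u ≡ v [SMOD ((Ideal.span {(p:S)})^n • ⊤ : Submodule S S)]) ↔ (p:S)^n ∣ u - v := by
    intro n u v
    rw [SModEq.sub_mem, smul_eq_mul, Ideal.mul_top, Ideal.span_singleton_pow,
      Ideal.mem_span_singleton]
  have hTex : ∀ x : R, ∃ L : S, ∀ n, (p:S)^n ∣ TS n x - L := by
    intro x
    obtain ⟨L, hL⟩ := IsPrecomplete.prec
      (inferInstance : IsPrecomplete (Ideal.span {(p:S)}) S)
      (f := fun n => TS n x) (fun {m n} hmn => (hsmod m _ _).mpr (hchain n m x hmn))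
    exact ⟨L, fun n => (hsmod n _ _).mp (hL n)⟩
  let T : R → S := fun x => (hTex x).choose
  have hT : ∀ x n, (p:S)^n ∣ TS n x - T x := fun x => (hTex x).choose_spec
  have hdiffS : ∀ u v : S, (∀ n, (p:S)^n ∣ u - v) → u = v := by
    intro u v h
    have h0 := IsHausdorff.haus
      (inferInstance : IsHausdorff (Ideal.span {(p:S)}) S) (u - v)
      (fun n => (hsmod n _ 0).mpr (by simpa using h n))
    exact sub_eq_zero.mp h0
  have Tadd : ∀ a b : R, T (a+b) = T a + T b := by
    intro a b
    refine hdiffS _ _ fun n => ?_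
    obtain ⟨c1, hc1⟩ := hT (a+b) n
    obtain ⟨c2, hc2⟩ := hT a n
    obtain ⟨c3, hc3⟩ := hT b n
    obtain ⟨c4, hc4⟩ := (pow_dvd_pow (p:S) (Nat.le_succ n)).trans ((key n).1 a b)
    exact ⟨c2 + c3 + c4 - c1, by linear_combination hc2 + hc3 + hc4 - hc1⟩
  have Tmul : ∀ a b : R, T (a*b) = T a * T b := by
    intro a b
    refine hdiffS _ _ fun n => ?_
    obtain ⟨c1, hc1⟩ := hT (a*b) n
    obtain ⟨c2, hc2⟩ := hT a n
    obtain ⟨c3, hc3⟩ := hT b n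
    obtain ⟨c4, hc4⟩ := (pow_dvd_pow (p:S) (Nat.le_succ n)).trans ((key n).2.1 a b)
    exact ⟨-c1 + c4 + TS n a * c3 + T b * c2, by
      linear_combination -hc1 + hc4 + TS n a * hc3 + T b * hc2⟩
  have Tone : T 1 = 1 := by
    refine hdiffS _ _ fun n => ?_
    obtain ⟨c1, hc1⟩ := hT 1 n
    obtain ⟨c4, hc4⟩ := (pow_dvd_pow (p:S) (Nat.le_succ n)).trans ((key n).2.2)
    exact ⟨c4 - c1, by linear_combination hc4 - hc1⟩
  have Tzero : T 0 = 0 := by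
    have h := Tadd 0 0
    rw [add_zero] at h
    linear_combination -h
  let THom : R →+* S :=
    { toFun := T
      map_one' := Tone
      map_mul' := Tmul
      map_zero' := Tzero
      map_add' := Tadd }
  have hTH : ∀ x, THom x = T x := fun _ => rfl
  have hTτ1 : ∀ b, (p:S) ∣ T (τ b) - t b := by
    intro b
    have e1 : (mk (Y (τ b)))^p = b := by rw [hmkY, hτ b, hfr]
    have e2 : TS 1 (τ b) - t b = (p:S) * t (mk (Rr (τ b))) := by
      rw [hTSs, hTS0, hTS0, ← map_pow t (mk (Y (τ b))) p, e1]
      ring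
    obtain ⟨c, hc⟩ := hT (τ b) 1
    rw [pow_one] at hc
    exact ⟨t (mk (Rr (τ b))) - c, by linear_combination e2 - hc⟩
  have hit : ∀ (n : ℕ) (a : R ⧸ Ideal.span {(p : R)}), (φi^[n] a) ^ p ^ n = a := by
    intro n
    induction n with
    | zero => intro a; simp
    | succ n ih =>
      intro a
      rw [Function.iterate_succ_apply, pow_succ, pow_mul, ih, hfr]
  have hTτ : ∀ a, THom (τ a) = t a := by
    intro a
    refine hdiffS _ _ fun n => ?_
    have h1 : τ a = (τ (φi^[n] a)) ^ p ^ n := by rw [← map_pow, hit]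
    have h2 : t a = (t (φi^[n] a)) ^ p ^ n := by rw [← map_pow, hit]
    have h3 := dvd_sub_pow_of_dvd_sub (hTτ1 (φi^[n] a)) n
    have h4 : THom (τ a) = (T (τ (φi^[n] a))) ^ p ^ n := by
      rw [hTH, h1]
      exact map_pow THom _ _
    rw [h4, h2]
    exact (pow_dvd_pow _ (Nat.le_succ n)).trans h3
  have hcont : ∀ n : ℕ, ∃ m : ℕ, ∀ x : R, (p:R)^m ∣ x → (p:S)^n ∣ THom x := by
    intro n
    refine ⟨n, fun x hx => ?_⟩
    obtain ⟨c, hc⟩ := hx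
    rw [hc, map_mul, map_pow, map_natCast]
    exact Dvd.intro _ rfl
  have hx1 : ∀ x : R, ∃ c, x = τ (mk x) + (p:R) * c := by
    intro x
    obtain ⟨c, hc⟩ := hdvdR (x - τ (mk x)) (by rw [map_sub, hτ, sub_self])
    exact ⟨c, by linear_combination hc⟩
  refine ⟨THom, ⟨hTτ, hcont⟩, ?_⟩
  intro T' hT'
  have claim : ∀ (n : ℕ) (x : R), (p:S)^n ∣ T' x - THom x := by
    intro n
    induction n with
    | zero => intro x; simp
    | succ n ih =>
      intro x
      obtain ⟨c, hc⟩ := hx1 x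
      obtain ⟨c', hc'⟩ := ih c
      refine ⟨c', ?_⟩
      rw [hc, map_add, map_add, map_mul, map_mul, map_natCast, map_natCast, hT'.1, hTτ]
      linear_combination (p:S) * hc'
  exact RingHom.ext fun x => hdiffS _ _ fun n => claim n x
end

section
/- The functor R ↦ R/(p) from strict p-rings to perfect rings of characteristic p is an equivalence of categories. -/
namespace StrictAux

set_option linter.unusedSectionVars false

open WittVector Function MvPolynomial Finset

variable {p : ℕ} [hp : Fact p.Prime] {C : Type*} [CommRing C]
  {k : Type*} [CommRing k] [CharP k p] [PerfectRing k p]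

theorem pow_p_dvd (hpp : p.Prime) {x y : C} {m : ℕ} (hm : 1 ≤ m)
    (h : (p : C) ^ m ∣ x - y) : (p : C) ^ (m + 1) ∣ x ^ p - y ^ p := by
  have hxy := add_pow_prime_eq hpp y (x - y)
  rw [add_sub_cancel] at hxy
  have h1 : x ^ p - y ^ p = (x - y) ^ p + (p : C) *
      ∑ k ∈ Finset.Ioo 0 p, y ^ k * (x - y) ^ (p - k) * ↑(p.choose k / p) := by
    have hs : y * (x - y) * ∑ k ∈ Finset.Ioo 0 p, y ^ (k - 1) * (x - y) ^ (p - k - 1) * ↑(p.choose k / p)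
        = ∑ k ∈ Finset.Ioo 0 p, y ^ k * (x - y) ^ (p - k) * ↑(p.choose k / p) := by
      rw [Finset.mul_sum]
      refine Finset.sum_congr rfl fun k hk => ?_
      rw [Finset.mem_Ioo] at hk
      obtain ⟨a, rfl⟩ : ∃ a, k = a + 1 := ⟨k - 1, by omega⟩
      obtain ⟨b, hb⟩ : ∃ b, p - (a + 1) = b + 1 := ⟨p - (a + 1) - 1, by omega⟩
      rw [hb]
      simp only [Nat.add_sub_cancel]
      ring
    rw [hxy, ← hs]; ring
  rw [h1]
  refine dvd_add ?_ ?_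
  · have hdvd : (p : C) ^ (m * p) ∣ (x - y) ^ p := by
      rw [pow_mul]; exact pow_dvd_pow_of_dvd h p
    refine dvd_trans (pow_dvd_pow (p : C) ?_) hdvd
    have := hpp.two_le
    calc m + 1 ≤ m * 2 := by omega
    _ ≤ m * p := Nat.mul_le_mul_left m this
  · rw [pow_succ, mul_comm ((p:C)^m)]
    refine mul_dvd_mul dvd_rfl ?_
    refine Finset.dvd_sum fun k hk => ?_
    rw [Finset.mem_Ioo] at hk
    have : (p : C) ^ m ∣ (x - y) ^ (p - k) :=
      dvd_trans h (dvd_pow_self _ (by omega))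
    exact Dvd.dvd.mul_right (Dvd.dvd.mul_left this _) _

theorem pow_pN_dvd (hpp : p.Prime) {x y : C} (h : (p : C) ∣ x - y) (N : ℕ) :
    (p : C) ^ (N + 1) ∣ x ^ p ^ N - y ^ p ^ N := by
  induction N with
  | zero => simpa using h
  | succ N ih =>
    have : x ^ p ^ (N + 1) = (x ^ p ^ N) ^ p := by rw [← pow_mul, pow_succ]
    rw [this, show y ^ p ^ (N + 1) = (y ^ p ^ N) ^ p by rw [← pow_mul, pow_succ]]
    exact pow_p_dvd hpp (by omega) ih

theorem smod_iff (n : ℕ) (x y : C) :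
    x ≡ y [SMOD (Ideal.span {(p : C)} ^ n • ⊤ : Submodule C C)] ↔ (p : C) ^ n ∣ x - y := by
  rw [SModEq.sub_mem, smul_eq_mul, Ideal.mul_top, Ideal.span_singleton_pow,
    Ideal.mem_span_singleton]

theorem exists_limit (hC : IsAdicComplete (Ideal.span {(p : C)}) C) (u : ℕ → C)
    (hu : ∀ N, (p : C) ^ (N + 1) ∣ u (N + 1) - u N) :
    ∃ L, ∀ N, (p : C) ^ (N + 1) ∣ L - u N := by
  have hcau : ∀ {m n : ℕ}, m ≤ n →
      u m ≡ u n [SMOD (Ideal.span {(p : C)} ^ m • ⊤ : Submodule C C)] := by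
    intro m n hmn
    rw [smod_iff]
    induction n with
    | zero => simp [Nat.le_zero.mp hmn]
    | succ n ih =>
      rcases Nat.lt_or_ge m (n+1) with hlt | hge
      · have h1 := ih (by omega)
        have h2 : (p : C) ^ m ∣ u (n+1) - u n :=
          dvd_trans (pow_dvd_pow _ (by omega)) (hu n)
        have h3 : u m - u (n+1) = (u m - u n) - (u (n+1) - u n) := by ring
        rw [h3]; exact dvd_sub h1 h2
      · have : m = n + 1 := by omega
        simp [this]
  obtain ⟨L, hL⟩ := IsPrecomplete.prec hC.toIsPrecomplete @hcau
  refine ⟨L, fun N => ?_⟩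
  have h1 : (p : C) ^ (N + 1) ∣ L - u (N + 1) := by
    have := (smod_iff (N+1) (u (N+1)) L).mp (hL (N+1))
    simpa using (dvd_neg.mpr this)
  have h2 := hu N
  have : L - u N = (L - u (N+1)) + (u (N+1) - u N) := by ring
  rw [this]; exact dvd_add h1 h2

theorem eq_of_forall_dvd (hC : IsAdicComplete (Ideal.span {(p : C)}) C) (x y : C)
    (h : ∀ N, (p : C) ^ N ∣ x - y) : x = y := by
  have := IsHausdorff.haus hC.toIsHausdorff (x - y) (fun n => by
    rw [smod_iff]; simpa using h n)
  exact sub_eq_zero.mp this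


theorem iter_versch_coeff_lt (z : WittVector p k) {n i : ℕ} (hi : i < n) :
    (verschiebung^[n] z).coeff i = 0 := by
  induction n generalizing i z with
  | zero => omega
  | succ n ih =>
    rw [iterate_succ_apply']
    cases i with
    | zero => exact verschiebung_coeff_zero _
    | succ i => rw [verschiebung_coeff_succ]; exact ih z (by omega)

theorem pow_mul_eq (z : WittVector p k) (n : ℕ) :
    (p : WittVector p k) ^ n * z = verschiebung^[n] (frobenius^[n] z) := by
  induction n generalizing z with
  | zero => simp
  | succ n ih =>
    have h1 : (p : WittVector p k) ^ (n+1) * z = (p : WittVector p k) ^ n * ((p : WittVector p k) * z) := by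
      ring
    rw [h1, ih, show (p : WittVector p k) * z = verschiebung (frobenius z) by
      rw [verschiebung_frobenius]; ring]
    have hc : Function.Commute (frobenius : WittVector p k → WittVector p k) verschiebung :=
      verschiebung_frobenius_comm.symm
    have h2 : frobenius^[n] (verschiebung (frobenius z)) = verschiebung (frobenius^[n] (frobenius z)) :=
      (hc.iterate_left n) _
    rw [h2, iterate_succ_apply verschiebung, iterate_succ_apply frobenius]

theorem torsionfree (x : WittVector p k) (h : (p : WittVector p k) * x = 0) : x = 0 := by
  have h1 : verschiebung (frobenius x) = 0 := by
    rw [verschiebung_frobenius]; rw [mul_comm] at h; exact h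
  have h2 : frobenius x = 0 := by
    apply WittVector.ext; intro n
    have := congrArg (fun w => WittVector.coeff w (n+1)) h1
    simpa [verschiebung_coeff_succ] using this
  have := (frobenius_bijective p k).injective (a₁ := x) (a₂ := 0)
  simp only [map_zero] at this
  exact this h2

theorem eq_versch_of_coeff_zero (x : WittVector p k) {n : ℕ} (h : ∀ i < n, x.coeff i = 0) :
    x = verschiebung^[n] (WittVector.mk p fun i => x.coeff (i + n)) := by
  apply WittVector.ext; intro i
  rcases Nat.lt_or_ge i n with hi | hi
  · rw [h i hi, iter_versch_coeff_lt _ hi]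
  · obtain ⟨j, rfl⟩ : ∃ j, i = j + n := ⟨i - n, by omega⟩
    rw [iterate_verschiebung_coeff]
    rfl

theorem frob_iterate_symm (n : ℕ) (y : WittVector p k) :
    frobenius^[n] (((frobeniusEquiv p k).symm)^[n] y) = y := by
  have hstep : ∀ w : WittVector p k, frobenius ((frobeniusEquiv p k).symm w) = w := fun w =>
    (frobeniusEquiv p k).apply_symm_apply w
  induction n generalizing y with
  | zero => simp
  | succ m ih =>
    rw [iterate_succ_apply' ((frobeniusEquiv p k).symm : WittVector p k → WittVector p k),
      iterate_succ_apply (frobenius : WittVector p k → WittVector p k), hstep]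
    exact ih y

theorem mem_span_pow_iff (x : WittVector p k) (n : ℕ) :
    x ∈ Ideal.span {(p : WittVector p k) ^ n} ↔ ∀ i < n, x.coeff i = 0 := by
  rw [Ideal.mem_span_singleton]
  constructor
  · rintro ⟨z, rfl⟩
    intro i hi
    rw [pow_mul_eq]
    exact iter_versch_coeff_lt _ hi
  · intro h
    set y := WittVector.mk p fun i => x.coeff (i + n) with hy
    refine ⟨((frobeniusEquiv p k).symm)^[n] y, ?_⟩
    have hf := frob_iterate_symm n y
    rw [pow_mul_eq, hf]
    exact eq_versch_of_coeff_zero x h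

theorem sub_mem_span_iff (x y : WittVector p k) (n : ℕ) :
    x - y ∈ Ideal.span {(p : WittVector p k) ^ n} ↔ ∀ i < n, x.coeff i = y.coeff i := by
  rw [mem_span_pow_iff]
  constructor
  · intro h i hi
    have h2 : WittVector.truncate n (x - y) = 0 := by
      rw [← RingHom.mem_ker, WittVector.mem_ker_truncate]
      exact h
    rw [map_sub, sub_eq_zero] at h2
    have := congrArg (fun w => TruncatedWittVector.coeff ⟨i, hi⟩ w) h2
    simpa [WittVector.coeff_truncate] using this
  · intro h i hi
    have h2 : WittVector.truncate n x = WittVector.truncate n y := by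
      apply TruncatedWittVector.ext
      intro j
      rw [WittVector.coeff_truncate, WittVector.coeff_truncate]
      exact h j j.2
    have : x - y ∈ RingHom.ker (WittVector.truncate (p := p) n) := by
      rw [RingHom.mem_ker, map_sub, sub_eq_zero]; exact h2
    rw [WittVector.mem_ker_truncate] at this
    exact this i hi

theorem witt_adic_complete : IsAdicComplete (Ideal.span {(p : WittVector p k)}) (WittVector p k) := by
  have h1 : IsHausdorff (Ideal.span {(p : WittVector p k)}) (WittVector p k) := by
    constructor
    intro x hx
    apply WittVector.ext; intro i
    have hd := (smod_iff (i+1) x 0).mp (hx (i+1))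
    rw [sub_zero] at hd
    have := (mem_span_pow_iff x (i+1)).mp (Ideal.mem_span_singleton.mpr hd)
    simpa using this i (by omega)
  have h2 : IsPrecomplete (Ideal.span {(p : WittVector p k)}) (WittVector p k) := by
    constructor
    intro f hf
    refine ⟨WittVector.mk p fun i => (f (i+1)).coeff i, fun n => ?_⟩
    rw [smod_iff, ← Ideal.mem_span_singleton, sub_mem_span_iff]
    intro i hi
    have hle : i + 1 ≤ n := by omega
    have hd := (smod_iff (i+1) (f (i+1)) (f n)).mp (hf hle)
    have h2 := (sub_mem_span_iff (f (i+1)) (f n) (i+1)).mp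
      (Ideal.mem_span_singleton.mpr hd) i (by omega)
    rw [WittVector.coeff_mk]
    exact h2.symm
  exact { toIsHausdorff := h1, toIsPrecomplete := h2 }

/-- residue ring of Witt vectors -/
noncomputable def wittResidueEquiv : (WittVector p k ⧸ Ideal.span {(p : WittVector p k)}) ≃+* k := by
  have hker : Ideal.span {(p : WittVector p k)} = RingHom.ker (WittVector.constantCoeff) := by
    ext x
    rw [RingHom.mem_ker]
    have := mem_span_pow_iff x 1
    rw [pow_one] at this
    rw [this]
    constructor
    · intro h
      simpa [WittVector.constantCoeff] using h 0 (by omega)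
    · intro h i hi
      interval_cases i
      simpa [WittVector.constantCoeff] using h
  refine (Ideal.quotEquivOfEq hker).trans ?_
  exact RingHom.quotientKerEquivOfSurjective (fun a => ⟨WittVector.teichmuller p a, by
    simp [WittVector.constantCoeff, WittVector.teichmuller_coeff_zero]⟩)

theorem ringHom_aeval_int {D : Type*} [CommRing D] {σ : Type*} (ψ : C →+* D) (F : σ → C)
    (φ : MvPolynomial σ ℤ) : ψ (aeval F φ) = aeval (fun i => ψ (F i)) φ := by
  conv_rhs => rw [aeval_def, ← coe_eval₂Hom]
  rw [map_aeval]
  exact eval₂Hom_congr (RingHom.ext_int _ _) rfl rfl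

variable (p C) in
/-- a section of the quotient map -/
noncomputable def sec : C ⧸ Ideal.span {(p : C)} → C :=
  Function.surjInv Ideal.Quotient.mk_surjective

theorem mk_sec (z : C ⧸ Ideal.span {(p : C)}) :
    Ideal.Quotient.mk (Ideal.span {(p : C)}) (sec p C z) = z :=
  Function.surjInv_eq _ z

variable (p) in
/-- iterated inverse Frobenius as a ring hom -/
noncomputable def fI : ℕ → (k →+* k)
  | 0 => RingHom.id k
  | (N+1) => (fI N).comp ((_root_.frobeniusEquiv k p).symm : k →+* k)

theorem fI_succ (N : ℕ) (z : k) :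
    fI p (N+1) z = fI p N ((_root_.frobeniusEquiv k p).symm z) := rfl

theorem fI_succ_pow (N : ℕ) (z : k) : (fI p (N+1) z) ^ p = fI p N z := by
  rw [fI_succ, ← map_pow, frobeniusEquiv_symm_pow_p]

theorem fI_pow (N : ℕ) (z : k) : (fI p N z) ^ (p ^ N) = z := by
  induction N generalizing z with
  | zero => simp [fI]
  | succ N ih =>
    rw [pow_succ, mul_comm, pow_mul, fI_succ_pow, ih]

variable (p) in
/-- ghost-style partial sums -/
noncomputable def gs (β : ℕ → C) (N : ℕ) : C :=
  ∑ i ∈ Finset.range (N+1), (p : C) ^ i * β i ^ p ^ (N - i)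

theorem gs_eq_aeval (β : ℕ → C) (N : ℕ) : gs p β N = aeval β (wittPolynomial p ℤ N) := by
  rw [wittPolynomial_eq_sum_C_mul_X_pow, map_sum, gs]
  refine Finset.sum_congr rfl fun i _ => ?_
  simp only [map_mul, map_pow, aeval_X, aeval_C]
  congr 1
  simp

theorem gs_congr {β γ : ℕ → C} {N : ℕ}
    (h : ∀ n ≤ N, Ideal.Quotient.mk (Ideal.span {(p : C)}) (β n)
      = Ideal.Quotient.mk (Ideal.span {(p : C)}) (γ n)) :
    (p : C) ^ (N + 1) ∣ gs p β N - gs p γ N := by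
  rw [gs, gs, ← Finset.sum_sub_distrib]
  refine Finset.dvd_sum fun i hi => ?_
  rw [Finset.mem_range] at hi
  have hi' : i ≤ N := by omega
  rw [← mul_sub]
  have h1 : (p : C) ∣ β i - γ i := by
    rw [← Ideal.mem_span_singleton, ← Ideal.Quotient.eq]
    exact h i hi'
  have h2 : (p : C) ^ (N - i + 1) ∣ β i ^ p ^ (N - i) - γ i ^ p ^ (N - i) :=
    pow_pN_dvd hp.out h1 (N - i)
  have h3 : (p : C) ^ (N + 1) = (p : C) ^ i * (p : C) ^ (N - i + 1) := by
    rw [← pow_add]; congr 1; omega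
  rw [h3]
  exact mul_dvd_mul dvd_rfl h2

/-- chosen lifts of the images of the iterated-Frobenius-inverted coefficients -/
noncomputable def bb (g : k →+* C ⧸ Ideal.span {(p : C)}) (x : WittVector p k) (N n : ℕ) : C :=
  sec p C (g (fI p N (x.coeff n)))

variable (g : k →+* C ⧸ Ideal.span {(p : C)})

theorem mk_bb (x : WittVector p k) (N n : ℕ) :
    Ideal.Quotient.mk (Ideal.span {(p : C)}) (bb g x N n) = g (fI p N (x.coeff n)) :=
  mk_sec _

theorem bb_cauchy (x : WittVector p k) (N : ℕ) :
    (p : C) ^ (N + 1) ∣ gs p (bb g x (N+1)) (N+1) - gs p (bb g x N) N := by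
  have hsplit : gs p (bb g x (N+1)) (N+1)
      = gs p (fun n => bb g x (N+1) n ^ p) N + (p : C) ^ (N+1) * bb g x (N+1) (N+1) ^ p ^ 0 := by
    rw [gs, gs, Finset.sum_range_succ]
    congr 1
    · refine Finset.sum_congr rfl fun i hi => ?_
      rw [Finset.mem_range] at hi
      congr 1
      rw [← pow_mul]
      congr 1
      have : N + 1 - i = (N - i) + 1 := by omega
      rw [this, pow_succ, mul_comm]
    · congr 2
      simp
  rw [hsplit]
  have h1 : (p : C) ^ (N+1) ∣ gs p (fun n => bb g x (N+1) n ^ p) N - gs p (bb g x N) N := by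
    refine gs_congr fun n _ => ?_
    rw [map_pow, mk_bb, mk_bb, ← map_pow, fI_succ_pow]
  have h2 : gs p (fun n => bb g x (N+1) n ^ p) N + (p : C) ^ (N+1) * bb g x (N+1) (N+1) ^ p ^ 0
      - gs p (bb g x N) N
      = (gs p (fun n => bb g x (N+1) n ^ p) N - gs p (bb g x N) N)
        + (p : C) ^ (N+1) * bb g x (N+1) (N+1) ^ p ^ 0 := by ring
  rw [h2]
  exact dvd_add h1 (Dvd.intro _ rfl)

/-- the underlying function of the lift of `g` to Witt vectors -/
noncomputable def theta0 (hC : IsAdicComplete (Ideal.span {(p : C)}) C) (x : WittVector p k) : C :=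
  (exists_limit hC (fun N => gs p (bb g x N) N) (fun N => bb_cauchy g x N)).choose

theorem theta0_spec (hC : IsAdicComplete (Ideal.span {(p : C)}) C) (x : WittVector p k) (N : ℕ) :
    (p : C) ^ (N + 1) ∣ theta0 g hC x - gs p (bb g x N) N :=
  (exists_limit hC (fun N => gs p (bb g x N) N) (fun N => bb_cauchy g x N)).choose_spec N

theorem eq_of_forall_dvd_succ (hC : IsAdicComplete (Ideal.span {(p : C)}) C) (x y : C) (h : ∀ N, (p : C) ^ (N + 1) ∣ x - y) : x = y :=
  eq_of_forall_dvd hC x y fun N => dvd_trans (pow_dvd_pow _ (Nat.le_succ N)) (h N)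

theorem theta0_approx (hC : IsAdicComplete (Ideal.span {(p : C)}) C) (x : WittVector p k) (N : ℕ) (β : ℕ → C)
    (hβ : ∀ n ≤ N, Ideal.Quotient.mk (Ideal.span {(p : C)}) (β n) = g (fI p N (x.coeff n))) :
    (p : C) ^ (N + 1) ∣ theta0 g hC x - gs p β N := by
  have h1 := theta0_spec g hC x N
  have h2 : (p : C) ^ (N+1) ∣ gs p (bb g x N) N - gs p β N :=
    gs_congr fun n hn => by rw [mk_bb, hβ n hn]
  have h3 : theta0 g hC x - gs p β N
      = (theta0 g hC x - gs p (bb g x N) N) + (gs p (bb g x N) N - gs p β N) := by ring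
  rw [h3]
  exact dvd_add h1 h2

theorem uncurry_matrix_zero (b c : ℕ → C) :
    (Function.uncurry ![b, c]) ∘ Prod.mk (0 : Fin 2) = b := by
  funext n; simp [Function.uncurry]

theorem uncurry_matrix_one (b c : ℕ → C) :
    (Function.uncurry ![b, c]) ∘ Prod.mk (1 : Fin 2) = c := by
  funext n; simp [Function.uncurry]

theorem mk_uncurry (b c : ℕ → C) (q : Fin 2 × ℕ) :
    Ideal.Quotient.mk (Ideal.span {(p : C)}) (Function.uncurry ![b, c] q)
      = Function.uncurry ![fun n => Ideal.Quotient.mk (Ideal.span {(p : C)}) (b n),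
          fun n => Ideal.Quotient.mk (Ideal.span {(p : C)}) (c n)] q := by
  obtain ⟨i, n⟩ := q
  fin_cases i <;> simp [Function.uncurry]

theorem theta0_one (hC : IsAdicComplete (Ideal.span {(p : C)}) C) : theta0 g hC 1 = 1 := by
  refine eq_of_forall_dvd_succ hC _ _ fun N => ?_
  have hγ : ∀ n ≤ N, Ideal.Quotient.mk (Ideal.span {(p : C)})
      ((fun n => if n = 0 then (1:C) else 0) n) = g (fI p N ((1 : WittVector p k).coeff n)) := by
    intro n _
    cases n with
    | zero => simp [WittVector.one_coeff_zero]
    | succ m => simp [WittVector.one_coeff_eq_of_pos p k (m+1) (Nat.succ_pos m)]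
  have happ := theta0_approx g hC 1 N _ hγ
  have hgs : gs p (fun n => if n = 0 then (1:C) else 0) N = 1 := by
    rw [gs]
    rw [Finset.sum_eq_single_of_mem 0 (Finset.mem_range.mpr (Nat.succ_pos N))]
    · simp
    · intro i _ hi
      simp [hi, zero_pow (pow_ne_zero _ hp.out.ne_zero)]
  rwa [hgs] at happ

theorem theta0_add (hC : IsAdicComplete (Ideal.span {(p : C)}) C) (x y : WittVector p k) :
    theta0 g hC (x + y) = theta0 g hC x + theta0 g hC y := by
  refine eq_of_forall_dvd_succ hC _ _ fun N => ?_
  set F : Fin 2 × ℕ → C := Function.uncurry ![bb g x N, bb g y N] with hF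
  set β : ℕ → C := fun n => aeval F (wittAdd p n) with hβdef
  -- Claim A
  have claimA : ∀ n ≤ N, Ideal.Quotient.mk (Ideal.span {(p : C)}) (β n)
      = g (fI p N ((x + y).coeff n)) := by
    intro n _
    rw [hβdef, ringHom_aeval_int]
    have hfun : (fun i => Ideal.Quotient.mk (Ideal.span {(p : C)}) (F i))
        = Function.uncurry ![(WittVector.map (g.comp (fI p N)) x).coeff,
            (WittVector.map (g.comp (fI p N)) y).coeff] := by
      funext q
      rw [hF, mk_uncurry]
      obtain ⟨i, m⟩ := q
      fin_cases i <;> simp [Function.uncurry, mk_bb, WittVector.map_coeff]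
    rw [hfun]
    have : (aeval (Function.uncurry ![(WittVector.map (g.comp (fI p N)) x).coeff,
        (WittVector.map (g.comp (fI p N)) y).coeff])) (wittAdd p n)
        = (WittVector.map (g.comp (fI p N)) x + WittVector.map (g.comp (fI p N)) y).coeff n := by
      rw [WittVector.add_coeff]; rfl
    refine this.trans ?_
    rw [← map_add, WittVector.map_coeff]
    rfl
  -- Claim B
  have claimB : gs p β N = gs p (bb g x N) N + gs p (bb g y N) N := by
    have key := congrArg (aeval F) (wittStructureInt_prop p
      (X (0 : Fin 2) + X 1 : MvPolynomial (Fin 2) ℤ) N)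
    rw [aeval_bind₁, aeval_bind₁] at key
    rw [map_add, aeval_X, aeval_X, aeval_rename, aeval_rename, uncurry_matrix_zero,
      uncurry_matrix_one] at key
    rw [gs_eq_aeval, gs_eq_aeval, gs_eq_aeval]
    exact key
  have d1 := theta0_approx g hC (x + y) N β claimA
  have d2 := theta0_spec g hC x N
  have d3 := theta0_spec g hC y N
  have hcomb : theta0 g hC (x + y) - (theta0 g hC x + theta0 g hC y)
      = (theta0 g hC (x + y) - gs p β N) - (theta0 g hC x - gs p (bb g x N) N)
        - (theta0 g hC y - gs p (bb g y N) N) := by rw [claimB]; ring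
  rw [hcomb]
  exact dvd_sub (dvd_sub d1 d2) d3

theorem theta0_mul (hC : IsAdicComplete (Ideal.span {(p : C)}) C) (x y : WittVector p k) :
    theta0 g hC (x * y) = theta0 g hC x * theta0 g hC y := by
  refine eq_of_forall_dvd_succ hC _ _ fun N => ?_
  set F : Fin 2 × ℕ → C := Function.uncurry ![bb g x N, bb g y N] with hF
  set β : ℕ → C := fun n => aeval F (wittMul p n) with hβdef
  have claimA : ∀ n ≤ N, Ideal.Quotient.mk (Ideal.span {(p : C)}) (β n)
      = g (fI p N ((x * y).coeff n)) := by
    intro n _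
    rw [hβdef, ringHom_aeval_int]
    have hfun : (fun i => Ideal.Quotient.mk (Ideal.span {(p : C)}) (F i))
        = Function.uncurry ![(WittVector.map (g.comp (fI p N)) x).coeff,
            (WittVector.map (g.comp (fI p N)) y).coeff] := by
      funext q
      rw [hF, mk_uncurry]
      obtain ⟨i, m⟩ := q
      fin_cases i <;> simp [Function.uncurry, mk_bb, WittVector.map_coeff]
    rw [hfun]
    have : (aeval (Function.uncurry ![(WittVector.map (g.comp (fI p N)) x).coeff,
        (WittVector.map (g.comp (fI p N)) y).coeff])) (wittMul p n)
        = (WittVector.map (g.comp (fI p N)) x * WittVector.map (g.comp (fI p N)) y).coeff n := by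
      rw [WittVector.mul_coeff]; rfl
    refine this.trans ?_
    rw [← map_mul, WittVector.map_coeff]
    rfl
  have claimB : gs p β N = gs p (bb g x N) N * gs p (bb g y N) N := by
    have key := congrArg (aeval F) (wittStructureInt_prop p
      (X (0 : Fin 2) * X 1 : MvPolynomial (Fin 2) ℤ) N)
    rw [aeval_bind₁, aeval_bind₁] at key
    rw [map_mul, aeval_X, aeval_X, aeval_rename, aeval_rename, uncurry_matrix_zero,
      uncurry_matrix_one] at key
    rw [gs_eq_aeval, gs_eq_aeval, gs_eq_aeval]
    exact key
  have d1 := theta0_approx g hC (x * y) N β claimA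
  have d2 := theta0_spec g hC x N
  have d3 := theta0_spec g hC y N
  have hprod : (p : C) ^ (N+1) ∣ theta0 g hC x * theta0 g hC y
      - gs p (bb g x N) N * gs p (bb g y N) N := by
    have : theta0 g hC x * theta0 g hC y - gs p (bb g x N) N * gs p (bb g y N) N
        = theta0 g hC x * (theta0 g hC y - gs p (bb g y N) N)
          + gs p (bb g y N) N * (theta0 g hC x - gs p (bb g x N) N) := by ring
    rw [this]
    exact dvd_add (Dvd.dvd.mul_left d3 _) (Dvd.dvd.mul_left d2 _)
  have hcomb : theta0 g hC (x * y) - theta0 g hC x * theta0 g hC y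
      = (theta0 g hC (x * y) - gs p β N)
        - (theta0 g hC x * theta0 g hC y - gs p β N) := by ring
  rw [hcomb]
  refine dvd_sub d1 ?_
  rw [claimB]
  exact hprod

/-- the lift of `g` to a ring hom from Witt vectors -/
noncomputable def theta (hC : IsAdicComplete (Ideal.span {(p : C)}) C) : WittVector p k →+* C where
  toFun := theta0 g hC
  map_one' := theta0_one g hC
  map_mul' := theta0_mul g hC
  map_add' := theta0_add g hC
  map_zero' := by
    have := theta0_add g hC 0 0
    rw [add_zero] at this
    exact left_eq_add.mp this

theorem mk_theta (hC : IsAdicComplete (Ideal.span {(p : C)}) C) (x : WittVector p k) :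
    Ideal.Quotient.mk (Ideal.span {(p : C)}) (theta g hC x) = g (x.coeff 0) := by
  have h0 := theta0_spec g hC x 0
  have hgs : gs p (bb g x 0) 0 = bb g x 0 0 := by
    rw [gs]; simp
  rw [hgs] at h0
  rw [pow_one] at h0
  have : Ideal.Quotient.mk (Ideal.span {(p : C)}) (theta g hC x)
      = Ideal.Quotient.mk (Ideal.span {(p : C)}) (bb g x 0 0) := by
    rw [Ideal.Quotient.eq, Ideal.mem_span_singleton]
    exact h0
  rw [this, mk_bb]
  rfl

section Strict

variable [CharP (C ⧸ Ideal.span {(p : C)}) p] [PerfectRing (C ⧸ Ideal.span {(p : C)}) p]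

theorem theta_id_surjective (hC : IsAdicComplete (Ideal.span {(p : C)}) C) :
    Function.Surjective (theta (RingHom.id (C ⧸ Ideal.span {(p : C)})) hC) := by
  intro a
  set θ := theta (RingHom.id (C ⧸ Ideal.span {(p : C)})) hC with hθ
  have hex : ∀ c : C, ∃ e : C,
      c - θ (teichmuller p (Ideal.Quotient.mk (Ideal.span {(p : C)}) c)) = (p : C) * e := by
    intro c
    have h1 : Ideal.Quotient.mk (Ideal.span {(p : C)})
        (θ (teichmuller p (Ideal.Quotient.mk (Ideal.span {(p : C)}) c)))
        = Ideal.Quotient.mk (Ideal.span {(p : C)}) c := by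
      rw [hθ, mk_theta]
      simp [WittVector.teichmuller_coeff_zero]
    have h2 := Ideal.Quotient.eq.mp h1
    rw [Ideal.mem_span_singleton] at h2
    obtain ⟨e, he⟩ := h2
    exact ⟨-e, by rw [show c - _ = -(θ (teichmuller p (Ideal.Quotient.mk _ c)) - c) by ring, he]; ring⟩
  let r : ℕ → C := fun n => Nat.rec a (fun _ rn => Classical.choose (hex rn)) n
  set t : ℕ → WittVector p (C ⧸ Ideal.span {(p : C)}) :=
    fun n => teichmuller p (Ideal.Quotient.mk (Ideal.span {(p : C)}) (r n)) with ht
  have hr : ∀ n, r n - θ (t n) = (p : C) * r (n+1) := fun n => Classical.choose_spec (hex (r n))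
  set s : ℕ → WittVector p (C ⧸ Ideal.span {(p : C)}) :=
    fun N => ∑ i ∈ Finset.range N, (p : WittVector p (C ⧸ Ideal.span {(p : C)})) ^ i * t i with hs
  obtain ⟨L, hL⟩ := exists_limit witt_adic_complete (fun N => s (N+1)) (by
    intro N
    have e1 : s (N+2) = s (N+1) + (p : WittVector p (C ⧸ Ideal.span {(p : C)})) ^ (N+1) * t (N+1) :=
      Finset.sum_range_succ _ (N+1)
    have : s (N+2) - s (N+1) = (p : WittVector p (C ⧸ Ideal.span {(p : C)})) ^ (N+1) * t (N+1) := by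
      rw [e1]; ring
    rw [this]
    exact Dvd.intro _ rfl)
  have hpart : ∀ N, a = (∑ i ∈ Finset.range N, (p : C) ^ i * θ (t i)) + (p : C) ^ N * r N := by
    intro N
    induction N with
    | zero => simp [r]
    | succ N ih =>
      rw [Finset.sum_range_succ]
      have h3 : r N = θ (t N) + (p : C) * r (N+1) := by
        linear_combination hr N
      calc a = (∑ i ∈ Finset.range N, (p : C) ^ i * θ (t i)) + (p : C) ^ N * r N := ih
      _ = (∑ i ∈ Finset.range N, (p : C) ^ i * θ (t i)) + (p : C) ^ N * (θ (t N) + (p : C) * r (N+1)) := by rw [← h3]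
      _ = ((∑ i ∈ Finset.range N, (p : C) ^ i * θ (t i)) + (p : C) ^ N * θ (t N)) + (p : C) ^ (N+1) * r (N+1) := by ring
  refine ⟨L, ?_⟩
  refine eq_of_forall_dvd_succ hC _ _ fun N => ?_
  have hθs : θ (s (N+1)) = ∑ i ∈ Finset.range (N+1), (p : C) ^ i * θ (t i) := by
    rw [hs, map_sum]
    refine Finset.sum_congr rfl fun i _ => ?_
    rw [map_mul, map_pow, map_natCast]
  have h4 : (p : C) ^ (N+1) ∣ θ L - θ (s (N+1)) := by
    obtain ⟨w, hw⟩ := hL N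
    rw [← map_sub, hw, map_mul, map_pow, map_natCast]
    exact Dvd.intro _ rfl
  have h5 : θ L - a = (θ L - θ (s (N+1))) - (p : C) ^ (N+1) * r (N+1) := by
    rw [hθs, hpart (N+1)]; ring
  rw [h5]
  exact dvd_sub h4 (Dvd.intro _ rfl)

theorem theta_id_injective (hC : IsAdicComplete (Ideal.span {(p : C)}) C)
    (htf : ∀ x : C, (p : C) * x = 0 → x = 0) :
    Function.Injective (theta (RingHom.id (C ⧸ Ideal.span {(p : C)})) hC) := by
  set θ := theta (RingHom.id (C ⧸ Ideal.span {(p : C)})) hC with hθ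
  have key : ∀ (n : ℕ) (x : WittVector p (C ⧸ Ideal.span {(p : C)})), θ x = 0 →
      x ∈ Ideal.span {(p : WittVector p (C ⧸ Ideal.span {(p : C)})) ^ n} := by
    intro n
    induction n with
    | zero => intro x _; simp [Ideal.span_singleton_one]
    | succ n ih =>
      intro x hx
      have hc0 : x.coeff 0 = 0 := by
        have h1 : Ideal.Quotient.mk (Ideal.span {(p : C)}) (θ x) = x.coeff 0 := by
          rw [hθ, mk_theta]; rfl
        rw [hx, map_zero] at h1
        exact h1.symm
      have hx1 : x ∈ Ideal.span {(p : WittVector p (C ⧸ Ideal.span {(p : C)})) ^ 1} := by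
        rw [mem_span_pow_iff]
        intro i hi
        interval_cases i
        exact hc0
      rw [Ideal.mem_span_singleton, pow_one] at hx1
      obtain ⟨z, hz⟩ := hx1
      have hθz : θ z = 0 := by
        apply htf
        rw [show (p : C) * θ z = θ ((p : WittVector p (C ⧸ Ideal.span {(p : C)})) * z) by
          rw [map_mul, map_natCast], ← hz, hx]
      have := ih z hθz
      rw [Ideal.mem_span_singleton] at this ⊢
      obtain ⟨w, hw⟩ := this
      exact ⟨w, by rw [hz, hw]; ring⟩
  intro x y hxy
  have hsub : θ (x - y) = 0 := by rw [map_sub, hxy, sub_self]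
  have : x - y = 0 := by
    refine eq_of_forall_dvd witt_adic_complete _ _ fun N => ?_
    rw [sub_zero]
    exact Ideal.mem_span_singleton.mp (key N (x - y) hsub)
  exact sub_eq_zero.mp this

end Strict

end StrictAux

/-- The functor `R ↦ R/(p)` from strict `p`-rings to perfect rings of characteristic `p`
is an equivalence of categories: it is fully faithful (base change `R →+* S` to
`R/(p) →+* S/(p)` is bijective on homomorphisms) and essentially surjective (every perfect
ring of characteristic `p` arises, up to isomorphism, as `R/(p)` for a strict `p`-ring `R`). -/
theorem strictPRing_equiv_perfect (p : ℕ) [Fact p.Prime] :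
    (∀ (A B : Type) [CommRing A] [CommRing B],
      (∀ x : A, (p : A) * x = 0 → x = 0) → IsAdicComplete (Ideal.span {(p : A)}) A →
      ∀ [CharP (A ⧸ Ideal.span {(p : A)}) p] [PerfectRing (A ⧸ Ideal.span {(p : A)}) p],
      (∀ x : B, (p : B) * x = 0 → x = 0) → IsAdicComplete (Ideal.span {(p : B)}) B →
      ∀ [CharP (B ⧸ Ideal.span {(p : B)}) p] [PerfectRing (B ⧸ Ideal.span {(p : B)}) p],
      Function.Bijective (fun f : A →+* B =>
        Ideal.quotientMap (Ideal.span {(p : B)}) f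
          (by
            rw [Ideal.span_le]
            intro x hx
            rw [Set.mem_singleton_iff] at hx
            subst hx
            refine Ideal.mem_comap.mpr ?_
            rw [map_natCast f p]
            exact Ideal.subset_span (Set.mem_singleton ((p : B))))))
    ∧
    (∀ (Q : Type) [CommRing Q] [CharP Q p] [PerfectRing Q p],
      ∃ (R : Type) (_ : CommRing R),
        (∀ x : R, (p : R) * x = 0 → x = 0) ∧
        IsAdicComplete (Ideal.span {(p : R)}) R ∧
        Nonempty ((R ⧸ Ideal.span {(p : R)}) ≃+* Q)) := by
  constructor
  · intro A B _ _ htfA hcA _ _ htfB hcB _ _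
    constructor
    · -- injectivity of reduction on homs
      intro f g hfg
      have hbase : ∀ a : A, (p : B) ∣ f a - g a := by
        intro a
        have h1 := congrArg (fun φ => φ (Ideal.Quotient.mk (Ideal.span {(p : A)}) a)) hfg
        simp only [Ideal.quotientMap_mk] at h1
        rw [← Ideal.mem_span_singleton, ← Ideal.Quotient.eq]
        exact h1
      have hstep : ∀ n : ℕ, ∀ a : A, (p : B) ^ (n+1) ∣ f a - g a := by
        intro n
        induction n with
        | zero => intro a; rw [pow_one]; exact hbase a
        | succ n ih =>
          intro a
          obtain ⟨c, hc⟩ := Ideal.Quotient.mk_surjective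
            ((frobeniusEquiv (A ⧸ Ideal.span {(p : A)}) p).symm
              (Ideal.Quotient.mk (Ideal.span {(p : A)}) a))
          have hcp : Ideal.Quotient.mk (Ideal.span {(p : A)}) (c ^ p)
              = Ideal.Quotient.mk (Ideal.span {(p : A)}) a := by
            rw [map_pow, hc, frobeniusEquiv_symm_pow_p]
          have hpd : (p : A) ∣ a - c ^ p := by
            rw [← Ideal.mem_span_singleton, ← Ideal.Quotient.eq]
            exact hcp.symm
          obtain ⟨d, hd⟩ := hpd
          have ha : a = c ^ p + (p : A) * d := by rw [← hd]; ring
          have hfa : f a = f c ^ p + (p : B) * f d := by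
            rw [ha, map_add, map_mul, map_pow, map_natCast]
          have hga : g a = g c ^ p + (p : B) * g d := by
            rw [ha, map_add, map_mul, map_pow, map_natCast]
          have hsplit : f a - g a = (f c ^ p - g c ^ p) + (p : B) * (f d - g d) := by
            rw [hfa, hga]; ring
          rw [hsplit]
          refine dvd_add ?_ ?_
          · exact StrictAux.pow_p_dvd Fact.out (Nat.succ_le_succ (Nat.zero_le n)) (ih c)
          · rw [show n + 1 + 1 = (n + 1) + 1 from rfl, pow_succ']
            exact mul_dvd_mul_left _ (ih d)
      apply RingHom.ext
      intro a
      refine StrictAux.eq_of_forall_dvd hcB _ _ fun N => ?_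
      cases N with
      | zero => rw [pow_zero]; exact one_dvd _
      | succ N => exact hstep N a
    · -- surjectivity of reduction on homs
      intro gbar
      have hbij : Function.Bijective
          (StrictAux.theta (RingHom.id (A ⧸ Ideal.span {(p : A)})) hcA) :=
        ⟨StrictAux.theta_id_injective hcA htfA, StrictAux.theta_id_surjective hcA⟩
      let eA := RingEquiv.ofBijective _ hbij
      refine ⟨(StrictAux.theta gbar hcB).comp (eA.symm : A →+* _), ?_⟩
      apply RingHom.ext
      intro x
      obtain ⟨a, rfl⟩ := Ideal.Quotient.mk_surjective x
      rw [Ideal.quotientMap_mk]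
      have h1 : Ideal.Quotient.mk (Ideal.span {(p : B)})
          ((StrictAux.theta gbar hcB) (eA.symm a)) = gbar ((eA.symm a).coeff 0) :=
        StrictAux.mk_theta gbar hcB _
      have h2 : ((eA.symm a : WittVector p (A ⧸ Ideal.span {(p : A)}))).coeff 0
          = Ideal.Quotient.mk (Ideal.span {(p : A)}) a := by
        have h3 := StrictAux.mk_theta (RingHom.id (A ⧸ Ideal.span {(p : A)})) hcA (eA.symm a)
        have h4 : (StrictAux.theta (RingHom.id (A ⧸ Ideal.span {(p : A)})) hcA) (eA.symm a) = a :=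
          eA.apply_symm_apply a
        rw [h4] at h3
        exact h3.symm
      simp only [RingHom.coe_comp, Function.comp_apply]
      have h5 : ((eA.symm : A →+* WittVector p (A ⧸ Ideal.span {(p : A)})) a) = eA.symm a := rfl
      rw [h5, h1, h2]
    -- essential surjectivity
  · intro Q _ _ _
    refine ⟨WittVector p Q, inferInstance, ?_, StrictAux.witt_adic_complete,
      ⟨StrictAux.wittResidueEquiv⟩⟩
    intro x hx
    exact StrictAux.torsionfree x hx
end

section
/- Let K be an analytic field of mixed characteristics and let o_{K'} = lim← o_K/(p) under Frobenius, with norm |x̄|' = |θ(x̄)| where θ is the multiplicative lift of the projection to o_K/(p). Then for x̄, ȳ ∈ o_{K'}, x̄ is divisible by ȳ if and only if |x̄|' ≤ |ȳ|'. -/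
open scoped NNReal

set_option synthInstance.maxHeartbeats 1000000
set_option maxHeartbeats 1000000

/-- The valuation ring `o_K` of an analytic field `K` (a field complete with respect to a
multiplicative nonarchimedean norm, given by a rank-one valuation). -/
noncomputable abbrev OK (K : Type*) [Field K] [Valued K ℝ≥0] : Subring K :=
  Valued.v.integer

/-- `o_K/(p)`. -/
abbrev OKmodp (p : ℕ) (K : Type*) [Field K] [Valued K ℝ≥0] : Type _ :=
  OK K ⧸ Ideal.span {(p : OK K)}

/-- `K` is discretely valued: the norm group is generated by a single `γ < 1`. -/
def IsDiscretelyValued (K : Type*) [Field K] [Valued K ℝ≥0] : Prop :=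
  ∃ γ : ℝ≥0, γ < 1 ∧ ∀ x : K, x ≠ 0 → ∃ n : ℤ, Valued.v x = γ ^ n

theorem charP_OKmodp (p : ℕ) [Fact p.Prime] (K : Type*) [Field K] [Valued K ℝ≥0]
    (hp : Valued.v (p : K) = (p : ℝ≥0)⁻¹) : CharP (OKmodp p K) p := by
  refine CharP.quotient _ p ?_
  intro hu
  rcases isUnit_iff_exists_inv.mp hu with ⟨u, huu⟩
  have hcast : (((p : OK K) * u : OK K) : K) = (1 : K) := by rw [huu]; rfl
  have hple : ((p : OK K) : K) = (p : K) := by push_cast; ring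
  have hu1 : Valued.v ((u : K)) ≤ 1 := u.2
  have h1 : Valued.v ((p : K)) * Valued.v ((u : K)) = 1 := by
    rw [← hple, ← Valued.v.map_mul]
    rw [show ((p : OK K) : K) * ((u : K)) = (((p : OK K) * u : OK K) : K) from rfl, hcast]
    exact Valued.v.map_one
  rw [hp] at h1
  have hp1 : ((p : ℝ≥0))⁻¹ < 1 := by
    have h2 : (1 : ℝ≥0) < (p : ℝ≥0) := by
      exact_mod_cast Nat.one_lt_cast.mpr (Fact.out : p.Prime).one_lt
    exact inv_lt_one_of_one_lt₀ h2
  have : (p : ℝ≥0)⁻¹ * Valued.v ((u : K)) ≤ (p : ℝ≥0)⁻¹ * 1 := by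
    first
      | exact mul_le_mul_of_nonneg_left hu1 (zero_le _)
      | gcongr
  rw [h1] at this
  simp at this
  exact absurd (lt_of_le_of_lt this hp1) (lt_irrefl _)

/-- The tilt `o_{K'} = lim← o_K/(p)` (inverse limit under Frobenius), realized as a subring
of the product ring `Π_n o_K/(p)`. -/
noncomputable def TiltRing (p : ℕ) [Fact p.Prime] (K : Type*) [Field K] [Valued K ℝ≥0]
    (hp : Valued.v (p : K) = (p : ℝ≥0)⁻¹) : Subring (∀ _ : ℕ, OKmodp p K) where
  carrier := {x | ∀ n, x (n + 1) ^ p = x n}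
  zero_mem' := by
    intro n
    simp only [Pi.zero_apply]
    exact zero_pow (Fact.out : p.Prime).ne_zero
  one_mem' := by intro n; simp
  add_mem' := by
    haveI := charP_OKmodp p K hp
    intro a b ha hb n
    simp only [Pi.add_apply]
    rw [add_pow_char, ha n, hb n]
  mul_mem' := by
    intro a b ha hb n
    simp only [Pi.mul_apply]
    rw [mul_pow, ha n, hb n]
  neg_mem' := by
    haveI := charP_OKmodp p K hp
    intro a ha n
    simp only [Pi.neg_apply]
    rw [show (-(a (n+1))) = (-1) * a (n+1) by ring, mul_pow, neg_one_pow_char, ha n]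
    ring

/-- The defining property of the tilt norm `|x̄|' = |θ(x̄)|`: it vanishes at `0`, and
for `x̄ = (x̄_n)_n` in the tilt, `|x̄|' = |x_n|^(p^n)` for any lift `x_n ∈ o_K` of the
`n`-th component `x̄_n` whose norm exceeds `|p| = p⁻¹`. -/
def IsTiltNorm (p : ℕ) [Fact p.Prime] (K : Type*) [Field K] [Valued K ℝ≥0]
    (hp : Valued.v (p : K) = (p : ℝ≥0)⁻¹)
    (N : TiltRing p K hp → ℝ≥0) : Prop :=
  N 0 = 0 ∧
  ∀ (x : TiltRing p K hp) (n : ℕ) (xn : OK K),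
    Ideal.Quotient.mk (Ideal.span {(p : OK K)}) xn = x.val n →
    (p : ℝ≥0)⁻¹ < Valued.v (xn : K) →
    N x = Valued.v (xn : K) ^ (p ^ n)

namespace TiltAux
open Filter

noncomputable abbrev qmk (p : ℕ) (K : Type*) [Field K] [Valued K ℝ≥0] :
    OK K →+* OKmodp p K := Ideal.Quotient.mk _

variable {p : ℕ} [Fact p.Prime] {K : Type*} [Field K] [Valued K ℝ≥0]

lemma one_lt_p : 1 < p := (Fact.out : p.Prime).one_lt

lemma vp_lt_one : ((p : ℝ≥0))⁻¹ < 1 := by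
  have h2 : (1 : ℝ≥0) < (p : ℝ≥0) := by exact_mod_cast one_lt_p (p := p)
  exact inv_lt_one_of_one_lt₀ h2

lemma vp_pos : (0 : ℝ≥0) < ((p : ℝ≥0))⁻¹ := by
  have h2 : (0 : ℝ≥0) < (p : ℝ≥0) := by
    have := one_lt_p (p := p); exact_mod_cast (by omega : 0 < p)
  positivity

lemma coe_p : (((p : OK K)) : K) = (p : K) := by push_cast; ring

variable (hp : Valued.v (p : K) = (p : ℝ≥0)⁻¹)

include hp in
lemma mk_eq_zero (w : OK K) :
    qmk p K w = 0 ↔ Valued.v (w : K) ≤ (p : ℝ≥0)⁻¹ := by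
  rw [Ideal.Quotient.eq_zero_iff_mem, Ideal.mem_span_singleton]
  constructor
  · rintro ⟨c, rfl⟩
    have hcoe : (((p : OK K) * c : OK K) : K) = (p : K) * (c : K) := rfl
    rw [hcoe, Valued.v.map_mul, hp]
    calc (p : ℝ≥0)⁻¹ * Valued.v (c : K) ≤ (p : ℝ≥0)⁻¹ * 1 := mul_le_mul_right c.2 _
      _ = (p : ℝ≥0)⁻¹ := mul_one _
  · intro h
    have hpne : (p : K) ≠ 0 := by
      intro h0
      rw [h0, Valued.v.map_zero] at hp
      exact absurd hp.symm (ne_of_gt (vp_pos (p := p)))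
    have hc1 : Valued.v ((w : K) / (p : K)) ≤ 1 := by
      rw [map_div₀, hp, div_le_one vp_pos]
      exact h
    refine ⟨⟨(w : K) / (p : K), hc1⟩, ?_⟩
    apply Subtype.ext
    show (w : K) = (((p : OK K)) : K) * ((w : K) / (p : K))
    rw [coe_p, mul_div_cancel₀ _ hpne]

include hp in
lemma mk_eq_mk (w w' : OK K) :
    qmk p K w = qmk p K w' ↔ Valued.v ((w : K) - (w' : K)) ≤ (p : ℝ≥0)⁻¹ := by
  rw [← sub_eq_zero, ← map_sub, mk_eq_zero hp]
  rfl

omit [Fact p.Prime] in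
lemma v_pow_sub_pow (a b : K) (ha : Valued.v a ≤ 1) (hb : Valued.v b ≤ 1) (n : ℕ) :
    Valued.v (a ^ n - b ^ n) ≤ Valued.v (a - b) := by
  rw [← geom_sum₂_mul a b n, Valued.v.map_mul]
  have hS : Valued.v (∑ i ∈ Finset.range n, a ^ i * b ^ (n - 1 - i)) ≤ 1 := by
    refine Valuation.map_sum_le _ fun i _ => ?_
    rw [Valued.v.map_mul, map_pow, map_pow]
    exact mul_le_one' (pow_le_one' ha _) (pow_le_one' hb _)
  calc Valued.v (∑ i ∈ Finset.range n, a ^ i * b ^ (n - 1 - i)) * Valued.v (a - b)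
      ≤ 1 * Valued.v (a - b) := mul_le_mul_left hS _
    _ = Valued.v (a - b) := one_mul _

include hp in
lemma v_frob (a b : K) (ha : Valued.v a ≤ 1) (hb : Valued.v b ≤ 1)
    (hab : Valued.v (a - b) ≤ (p : ℝ≥0)⁻¹) :
    Valued.v (a ^ p - b ^ p) ≤ (p : ℝ≥0)⁻¹ * Valued.v (a - b) := by
  rw [← geom_sum₂_mul a b p, Valued.v.map_mul]
  refine mul_le_mul_left ?_ _
  have hterm : ∀ i ∈ Finset.range p,
      a ^ i * b ^ (p - 1 - i) = (a ^ i - b ^ i) * b ^ (p - 1 - i) + b ^ (p - 1) := by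
    intro i hi
    have hip : i + (p - 1 - i) = p - 1 := by
      have := Finset.mem_range.mp hi; omega
    have : b ^ (p - 1) = b ^ i * b ^ (p - 1 - i) := by rw [← pow_add, hip]
    rw [this]; ring
  rw [Finset.sum_congr rfl hterm, Finset.sum_add_distrib, Finset.sum_const,
    Finset.card_range, nsmul_eq_mul]
  refine le_trans (Valued.v.map_add _ _) (max_le ?_ ?_)
  · refine Valuation.map_sum_le _ fun i _ => ?_
    rw [Valued.v.map_mul, map_pow]
    calc Valued.v (a ^ i - b ^ i) * Valued.v b ^ (p - 1 - i)
        ≤ (p : ℝ≥0)⁻¹ * 1 :=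
          mul_le_mul' (le_trans (v_pow_sub_pow a b ha hb i) hab) (pow_le_one' hb _)
      _ = (p : ℝ≥0)⁻¹ := mul_one _
  · rw [Valued.v.map_mul, map_pow, hp]
    calc (p : ℝ≥0)⁻¹ * Valued.v b ^ (p - 1) ≤ (p : ℝ≥0)⁻¹ * 1 :=
        mul_le_mul_right (pow_le_one' hb _) _
      _ = (p : ℝ≥0)⁻¹ := mul_one _

include hp in
lemma v_frob_iter (a b : K) (ha : Valued.v a ≤ 1) (hb : Valued.v b ≤ 1)
    (hab : Valued.v (a - b) ≤ (p : ℝ≥0)⁻¹) (k : ℕ) :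
    Valued.v (a ^ p ^ k - b ^ p ^ k) ≤ ((p : ℝ≥0)⁻¹) ^ k * Valued.v (a - b) := by
  induction k with
  | zero => simp
  | succ k ih =>
    have h1 : Valued.v (a ^ p ^ k) ≤ 1 := by rw [map_pow]; exact pow_le_one' ha _
    have h2 : Valued.v (b ^ p ^ k) ≤ 1 := by rw [map_pow]; exact pow_le_one' hb _
    have h3 : Valued.v (a ^ p ^ k - b ^ p ^ k) ≤ (p : ℝ≥0)⁻¹ := by
      refine le_trans ih ?_
      calc ((p : ℝ≥0)⁻¹) ^ k * Valued.v (a - b) ≤ 1 * (p : ℝ≥0)⁻¹ :=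
          mul_le_mul' (pow_le_one' (le_of_lt vp_lt_one) _) hab
        _ = (p : ℝ≥0)⁻¹ := one_mul _
    have key := v_frob hp (a ^ p ^ k) (b ^ p ^ k) h1 h2 h3
    have hE : ∀ c : K, c ^ p ^ (k + 1) = (c ^ p ^ k) ^ p := by
      intro c; rw [← pow_mul, ← pow_succ]
    rw [hE a, hE b]
    calc Valued.v ((a ^ p ^ k) ^ p - (b ^ p ^ k) ^ p)
        ≤ (p : ℝ≥0)⁻¹ * Valued.v (a ^ p ^ k - b ^ p ^ k) := key
      _ ≤ (p : ℝ≥0)⁻¹ * (((p : ℝ≥0)⁻¹) ^ k * Valued.v (a - b)) := mul_le_mul_right ih _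
      _ = ((p : ℝ≥0)⁻¹) ^ (k + 1) * Valued.v (a - b) := by ring

omit [Fact p.Prime] in
lemma seq_pow {M : Type*} [Monoid M] {f : ℕ → M} (hf : ∀ n, f (n + 1) ^ p = f n)
    (m k : ℕ) : f (m + k) ^ p ^ k = f m := by
  induction k with
  | zero => simp
  | succ k ih =>
    rw [show m + (k + 1) = (m + k) + 1 from rfl, pow_succ' p k, pow_mul, hf, ih]

lemma tilt_frob (x : TiltRing p K hp) (n : ℕ) : x.val (n + 1) ^ p = x.val n := x.2 n

lemma tilt_pow (x : TiltRing p K hp) (m k : ℕ) : x.val (m + k) ^ p ^ k = x.val m :=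
  seq_pow (tilt_frob hp x) m k

lemma tilt_tail_ne {x : TiltRing p K hp} (hx : x ≠ 0) :
    ∃ n₁, ∀ n, n₁ ≤ n → x.val n ≠ 0 := by
  have hv : x.val ≠ 0 := fun h => hx (Subtype.ext h)
  obtain ⟨n₁, hn₁⟩ := Function.ne_iff.mp hv
  refine ⟨n₁, fun n hn h0 => hn₁ ?_⟩
  have hpne : p ≠ 0 := by have := one_lt_p (p := p); omega
  have ht := tilt_pow hp x n₁ (n - n₁)
  rw [Nat.add_sub_cancel' hn] at ht
  rw [← ht, h0, zero_pow (pow_ne_zero _ hpne)]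
  rfl

lemma lift_norm_gt {x : TiltRing p K hp} {n : ℕ} (hx : x.val n ≠ 0) {w : OK K}
    (hw : qmk p K w = x.val n) : (p : ℝ≥0)⁻¹ < Valued.v (w : K) := by
  by_contra hle
  push_neg at hle
  have h0 : qmk p K w = 0 := (mk_eq_zero hp w).mpr hle
  rw [hw] at h0
  exact hx h0

lemma sharp [CompleteSpace K] (u : TiltRing p K hp) :
    ∃ X : ℕ → OK K, (∀ n, qmk p K (X n) = u.val n) ∧
      (∀ n, ((X (n + 1) : K)) ^ p = (X n : K)) := by
  choose uh huh using fun n =>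
    Ideal.Quotient.mk_surjective (I := Ideal.span {(p : OK K)}) (u.val n)
  set a : ℕ → ℕ → K := fun n k => ((uh (n + k) : K)) ^ p ^ k with ha
  have hale : ∀ n k, Valued.v (a n k) ≤ 1 := by
    intro n k
    show Valued.v (((uh (n + k) : K)) ^ p ^ k) ≤ 1
    rw [map_pow]; exact pow_le_one' (uh (n + k)).2 _
  have hstep : ∀ n k, Valued.v (a n (k + 1) - a n k) ≤ ((p : ℝ≥0)⁻¹) ^ (k + 1) := by
    intro n k
    have hmem1 : Valued.v ((uh (n + k + 1) : K) ^ p) ≤ 1 := by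
      rw [map_pow]; exact pow_le_one' (uh (n + k + 1)).2 _
    have hab : Valued.v ((uh (n + k + 1) : K) ^ p - (uh (n + k) : K)) ≤ (p : ℝ≥0)⁻¹ := by
      have hq : qmk p K (uh (n + k + 1) ^ p) = qmk p K (uh (n + k)) := by
        rw [map_pow, huh, huh, tilt_frob]
      have := (mk_eq_mk hp _ _).mp hq
      simpa using this
    have key := v_frob_iter hp _ _ hmem1 (uh (n + k)).2 hab k
    have e1 : a n (k + 1) = ((uh (n + k + 1) : K) ^ p) ^ p ^ k := by
      show ((uh (n + (k + 1)) : K)) ^ p ^ (k + 1) = _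
      rw [show n + (k + 1) = (n + k) + 1 from rfl, pow_succ' p k, pow_mul]
    have e0 : a n k = ((uh (n + k) : K)) ^ p ^ k := rfl
    rw [e1, e0]
    refine le_trans key ?_
    calc ((p : ℝ≥0)⁻¹) ^ k * Valued.v ((uh (n + k + 1) : K) ^ p - (uh (n + k) : K))
        ≤ ((p : ℝ≥0)⁻¹) ^ k * (p : ℝ≥0)⁻¹ := mul_le_mul_right hab _
      _ = ((p : ℝ≥0)⁻¹) ^ (k + 1) := (pow_succ _ _).symm
  have hchain : ∀ n k j, k ≤ j → Valued.v (a n j - a n k) ≤ ((p : ℝ≥0)⁻¹) ^ (k + 1) := by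
    intro n k j hkj
    induction j, hkj using Nat.le_induction with
    | base => simp
    | succ j hkj ih =>
      have e : a n (j + 1) - a n k = (a n (j + 1) - a n j) + (a n j - a n k) := by ring
      rw [e]
      refine le_trans (Valued.v.map_add _ _) (max_le (le_trans (hstep n j) ?_) ih)
      exact pow_le_pow_of_le_one zero_le (le_of_lt vp_lt_one) (by omega)
  have hcauchy : ∀ n, CauchySeq (a n) := by
    intro n
    rw [(Valued.hasBasis_uniformity K ℝ≥0).cauchySeq_iff]
    rintro γ -
    have hγ : (0 : ℝ≥0) < MonoidWithZeroHom.ValueGroup₀.embedding γ.1 :=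
      pos_iff_ne_zero.mpr
        ((map_ne_zero_iff _ MonoidWithZeroHom.ValueGroup₀.embedding_injective).mpr γ.ne_zero)
    obtain ⟨m, hm⟩ := exists_pow_lt_of_lt_one hγ (vp_lt_one (p := p))
    refine ⟨m, fun i hi j hj => ?_⟩
    show Valued.v.restrict (a n j - a n i) < γ.1
    rw [Valuation.restrict_lt_iff_lt_embedding]
    rcases le_total i j with hij | hij
    · refine lt_of_le_of_lt (le_trans (hchain n i j hij) ?_) hm
      exact pow_le_pow_of_le_one zero_le (le_of_lt vp_lt_one) (by omega)
    · rw [Valuation.map_sub_swap]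
      refine lt_of_le_of_lt (le_trans (hchain n j i hij) ?_) hm
      exact pow_le_pow_of_le_one zero_le (le_of_lt vp_lt_one) (by omega)
  choose X hX using fun n => cauchySeq_tendsto_of_complete (hcauchy n)
  have happrox : ∀ n (γ : ℝ≥0), 0 < γ → ∃ j, Valued.v (a n j - X n) < γ := by
    intro n γ hγ
    have hnhds : {y : K | Valued.v (y - X n) < γ} ∈ nhds (X n) := by
      obtain ⟨k, hk⟩ := exists_pow_lt_of_lt_one hγ (vp_lt_one (p := p))
      have hx0 : Valued.v.restrict ((p : K) ^ k) ≠ 0 := by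
        rw [Ne, Valuation.restrict_eq_zero_iff, map_pow, hp]
        exact pow_ne_zero _ (ne_of_gt vp_pos)
      refine Valued.mem_nhds.mpr ⟨Units.mk0 _ hx0, fun y hy => ?_⟩
      simp only [Set.mem_setOf_eq, Units.val_mk0] at hy
      have hy' := (Valued.v.restrict_lt_iff).mp hy
      rw [map_pow, hp] at hy'
      exact lt_trans hy' hk
    obtain ⟨j, hj⟩ := ((hX n).eventually_mem hnhds).exists
    exact ⟨j, hj⟩
  have hXle : ∀ n, Valued.v (X n) ≤ 1 := by
    intro n
    obtain ⟨j, hj⟩ := happrox n 1 one_pos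
    have e : X n = (X n - a n j) + a n j := by ring
    rw [e]
    refine le_trans (Valued.v.map_add _ _) (max_le ?_ (hale n j))
    rw [Valuation.map_sub_swap]
    exact le_of_lt hj
  have hXmod : ∀ n, Valued.v (X n - (uh n : K)) ≤ (p : ℝ≥0)⁻¹ := by
    intro n
    obtain ⟨j, hj⟩ := happrox n _ (vp_pos (p := p))
    have ha0 : a n 0 = (uh n : K) := by
      show ((uh (n + 0) : K)) ^ p ^ 0 = (uh n : K)
      rw [pow_zero, pow_one]
      rfl
    have e : X n - (uh n : K) = -(a n j - X n) + (a n j - a n 0) := by rw [ha0]; ring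
    rw [e]
    refine le_trans (Valued.v.map_add _ _) (max_le ?_ ?_)
    · rw [Valuation.map_neg]; exact le_of_lt hj
    · refine le_trans (hchain n 0 j (Nat.zero_le _)) ?_
      rw [pow_one]
  refine ⟨fun n => ⟨X n, hXle n⟩, fun n => ?_, fun n => ?_⟩
  · rw [← huh n]
    exact ((mk_eq_mk hp _ _).mpr (by simpa using hXmod n))
  · have h1 : Tendsto (fun k => a (n + 1) k ^ p) atTop (nhds (X (n + 1) ^ p)) :=
      (hX (n + 1)).pow p
    have h2 : (fun k => a (n + 1) k ^ p) = fun k => a n (k + 1) := by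
      funext k
      show ((uh (n + 1 + k) : K) ^ p ^ k) ^ p = (uh (n + (k + 1)) : K) ^ p ^ (k + 1)
      rw [show n + 1 + k = n + (k + 1) from by omega, ← pow_mul, ← pow_succ]
    have h3 : Tendsto (fun k => a n (k + 1)) atTop (nhds (X n)) :=
      (hX n).comp (tendsto_add_atTop_nat 1)
    exact tendsto_nhds_unique (h2 ▸ h1) h3

lemma norm_formula {N : TiltRing p K hp → ℝ≥0} (hN : IsTiltNorm p K hp N)
    {u : TiltRing p K hp} {n : ℕ} (hu : u.val n ≠ 0) {X : ℕ → OK K}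
    (hmk : ∀ m, qmk p K (X m) = u.val m) :
    N u = Valued.v (X n : K) ^ p ^ n ∧ (p : ℝ≥0)⁻¹ < Valued.v (X n : K) := by
  have h := lift_norm_gt hp hu (hmk n)
  exact ⟨hN.2 u n (X n) (hmk n) h, h⟩

lemma norm_pos_le_one [CompleteSpace K] {N : TiltRing p K hp → ℝ≥0}
    (hN : IsTiltNorm p K hp N) {u : TiltRing p K hp} (hu : u ≠ 0) :
    0 < N u ∧ N u ≤ 1 := by
  obtain ⟨n₁, h₁⟩ := tilt_tail_ne hp hu
  obtain ⟨X, hmk, -⟩ := sharp hp u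
  obtain ⟨hNu, hgt⟩ := norm_formula hp hN (h₁ n₁ le_rfl) hmk
  constructor
  · rw [hNu]; exact pow_pos (lt_trans (vp_pos (p := p)) hgt) _
  · rw [hNu]; exact pow_le_one' (X n₁).2 _

end TiltAux

/-- Divisibility in the tilt `o_{K'}` is governed by the norm: for `x̄, ȳ ∈ o_{K'}`,
`ȳ` divides `x̄` if and only if `|x̄|' ≤ |ȳ|'`. -/
theorem tilt_dvd_iff_norm_le (p : ℕ) [Fact p.Prime] (K : Type*) [Field K] [Valued K ℝ≥0]
    [CompleteSpace K] (hp : Valued.v (p : K) = (p : ℝ≥0)⁻¹)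
    (N : TiltRing p K hp → ℝ≥0) (hN : IsTiltNorm p K hp N)
    (x y : TiltRing p K hp) :
    y ∣ x ↔ N x ≤ N y := by
  classical
  constructor
  · rintro ⟨z, rfl⟩
    by_cases hyz : y * z = 0
    · rw [hyz, hN.1]
      exact zero_le
    have hy : y ≠ 0 := fun h => hyz (by rw [h, zero_mul])
    have hz : z ≠ 0 := fun h => hyz (by rw [h, mul_zero])
    obtain ⟨ny, hny⟩ := TiltAux.tilt_tail_ne hp hy
    obtain ⟨nz, hnz⟩ := TiltAux.tilt_tail_ne hp hz
    obtain ⟨Y, hYmk, -⟩ := TiltAux.sharp hp y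
    obtain ⟨Z, hZmk, -⟩ := TiltAux.sharp hp z
    have hNy0 : 0 < N y := (TiltAux.norm_pos_le_one hp hN hy).1
    have hNz0 : 0 < N z := (TiltAux.norm_pos_le_one hp hN hz).1
    have hNz1 : N z ≤ 1 := (TiltAux.norm_pos_le_one hp hN hz).2
    obtain ⟨m, hm⟩ := exists_pow_lt_of_lt_one (mul_pos hNy0 hNz0) (TiltAux.vp_lt_one (p := p))
    set n := max m (max ny nz) with hn
    have hNy := (TiltAux.norm_formula hp hN (hny n (by omega)) hYmk).1
    have hNz' := (TiltAux.norm_formula hp hN (hnz n (by omega)) hZmk).1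
    have hgt : (p : ℝ≥0)⁻¹ < Valued.v ((Y n : K) * (Z n : K)) := by
      by_contra hle
      push_neg at hle
      have h1 : N y * N z = Valued.v ((Y n : K) * (Z n : K)) ^ p ^ n := by
        rw [Valued.v.map_mul, mul_pow, ← hNy, ← hNz']
      have h2 : N y * N z ≤ ((p : ℝ≥0)⁻¹) ^ p ^ n := by
        rw [h1]; gcongr
      have h3 : ((p : ℝ≥0)⁻¹) ^ p ^ n ≤ ((p : ℝ≥0)⁻¹) ^ m :=
        pow_le_pow_of_le_one zero_le (le_of_lt (TiltAux.vp_lt_one (p := p)))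
          (le_trans (by omega : m ≤ n) (le_of_lt (Nat.lt_pow_self (n := n) (TiltAux.one_lt_p (p := p)))))
      exact absurd hm (not_lt.mpr (le_trans h2 h3))
    have hmkprod : Ideal.Quotient.mk (Ideal.span {(p : OK K)}) (Y n * Z n) = (y * z).val n := by
      rw [map_mul, hYmk, hZmk]; rfl
    have hcoe : ((Y n * Z n : OK K) : K) = (Y n : K) * (Z n : K) := rfl
    have hval := hN.2 (y * z) n (Y n * Z n) hmkprod (by rw [hcoe]; exact hgt)
    rw [hval, hcoe, Valued.v.map_mul, mul_pow, ← hNy, ← hNz']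
    calc N y * N z ≤ N y * 1 := mul_le_mul_right hNz1 _
      _ = N y := mul_one _
  · intro h
    by_cases hx : x = 0
    · rw [hx]; exact dvd_zero y
    by_cases hy : y = 0
    · exfalso
      have hNy0 : N y = 0 := by rw [hy, hN.1]
      have hpos := (TiltAux.norm_pos_le_one hp hN hx).1
      rw [hNy0] at h
      exact absurd (le_antisymm h zero_le) (ne_of_gt hpos)
    obtain ⟨nx, hnx⟩ := TiltAux.tilt_tail_ne hp hx
    obtain ⟨ny, hny⟩ := TiltAux.tilt_tail_ne hp hy
    obtain ⟨X, hXmk, hXfrob⟩ := TiltAux.sharp hp x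
    obtain ⟨Y, hYmk, hYfrob⟩ := TiltAux.sharp hp y
    set n₁ := max nx ny with hn₁
    have hfacts : ∀ m, n₁ ≤ m →
        N x = Valued.v (X m : K) ^ p ^ m ∧ N y = Valued.v (Y m : K) ^ p ^ m ∧
        (p : ℝ≥0)⁻¹ < Valued.v (Y m : K) := by
      intro m hm
      obtain ⟨h1, -⟩ := TiltAux.norm_formula hp hN (hnx m (by omega)) hXmk
      obtain ⟨h2, h3⟩ := TiltAux.norm_formula hp hN (hny m (by omega)) hYmk
      exact ⟨h1, h2, h3⟩
    have hYne : ∀ m, n₁ ≤ m → ((Y m : K)) ≠ 0 := by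
      intro m hm h0
      have h3 := (hfacts m hm).2.2
      rw [h0, Valued.v.map_zero] at h3
      simp at h3
    have hXY : ∀ m, n₁ ≤ m → Valued.v ((X m : K) / (Y m : K)) ≤ 1 := by
      intro m hm
      obtain ⟨h1, h2, h3⟩ := hfacts m hm
      have hle : Valued.v (X m : K) ≤ Valued.v (Y m : K) := by
        by_contra hlt
        push_neg at hlt
        have hpm : (p : ℕ) ^ m ≠ 0 :=
          pow_ne_zero _ (by have := TiltAux.one_lt_p (p := p); omega)
        have hpow := pow_lt_pow_left₀ hlt zero_le hpm
        rw [← h1, ← h2] at hpow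
        exact absurd h (not_le.mpr hpow)
      rw [map_div₀, div_le_one (lt_trans (TiltAux.vp_pos (p := p)) h3)]
      exact hle
    set W : ℕ → K := fun n => ((X (n + n₁) : K) / (Y (n + n₁) : K)) ^ p ^ n₁ with hW
    have hWle : ∀ n, Valued.v (W n) ≤ 1 := by
      intro n
      show Valued.v (((X (n + n₁) : K) / (Y (n + n₁) : K)) ^ p ^ n₁) ≤ 1
      rw [map_pow]
      exact pow_le_one' (hXY _ (Nat.le_add_left _ _)) _
    have hWfrob : ∀ n, W (n + 1) ^ p = W n := by
      intro n
      show (((X (n + 1 + n₁) : K) / (Y (n + 1 + n₁) : K)) ^ p ^ n₁) ^ p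
        = ((X (n + n₁) : K) / (Y (n + n₁) : K)) ^ p ^ n₁
      rw [← pow_mul, mul_comm (p ^ n₁) p, pow_mul]
      congr 1
      rw [div_pow, show n + 1 + n₁ = (n + n₁) + 1 from by omega, hXfrob, hYfrob]
    have hzmem : (fun n => Ideal.Quotient.mk (Ideal.span {(p : OK K)})
        (⟨W n, hWle n⟩ : OK K)) ∈ TiltRing p K hp := by
      intro n
      show (Ideal.Quotient.mk _ (⟨W (n + 1), hWle (n + 1)⟩ : OK K)) ^ p
        = Ideal.Quotient.mk _ (⟨W n, hWle n⟩ : OK K)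
      rw [← map_pow]
      congr 1
      apply Subtype.ext
      simp only [SubmonoidClass.coe_pow]
      exact hWfrob n
    refine ⟨⟨_, hzmem⟩, ?_⟩
    apply Subtype.ext
    funext n
    show x.val n = y.val n * Ideal.Quotient.mk _ (⟨W n, hWle n⟩ : OK K)
    have hYpow : ((Y (n + n₁) : K)) ^ p ^ n₁ = (Y n : K) := TiltAux.seq_pow (f := fun k => ((Y k : K))) hYfrob n n₁
    have hXpow : ((X (n + n₁) : K)) ^ p ^ n₁ = (X n : K) := TiltAux.seq_pow (f := fun k => ((X k : K))) hXfrob n n₁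
    have hkey : Y n * (⟨W n, hWle n⟩ : OK K) = X n := by
      apply Subtype.ext
      show (Y n : K) * W n = (X n : K)
      show (Y n : K) * ((X (n + n₁) : K) / (Y (n + n₁) : K)) ^ p ^ n₁ = (X n : K)
      rw [← hYpow, ← hXpow, ← mul_pow]
      congr 1
      rw [mul_comm, div_mul_cancel₀ _ (hYne (n + n₁) (Nat.le_add_left _ _))]
    rw [← hXmk n, ← hYmk n, ← map_mul, hkey]
end

section
/- Let K be an analytic field of mixed characteristics, not discretely valued, such that there exists ξ ∈ K with p^{-1} ≤ |ξ| < 1 and Frobenius surjective on o_K/(ξ). Then K is perfectoid, i.e., Frobenius is surjective on o_K/(p). -/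
open scoped NNReal

set_option synthInstance.maxHeartbeats 1000000
set_option maxHeartbeats 1000000

private lemma aux_rpow_inv_pow {p : ℕ} (hp : (p : ℝ) ≠ 0) (x : ℝ≥0) :
    (x ^ ((p : ℝ)⁻¹)) ^ (p : ℕ) = x := by
  rw [← NNReal.rpow_natCast (x ^ ((p:ℝ)⁻¹)) p, ← NNReal.rpow_mul,
    inv_mul_cancel₀ hp, NNReal.rpow_one]

/-- If `K` is an analytic field of mixed characteristics, not discretely valued, and there
is `ξ ∈ o_K` with `p⁻¹ ≤ |ξ| < 1` such that Frobenius is surjective on `o_K/(ξ)`, then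
`K` is perfectoid, i.e. Frobenius is surjective on `o_K/(p)`. -/
theorem perfectoid_of_frobenius_surjective_mod_xi (p : ℕ) [Fact p.Prime]
    (K : Type*) [Field K] [Valued K ℝ≥0] [CompleteSpace K]
    (hp : Valued.v (p : K) = (p : ℝ≥0)⁻¹)
    (hnd : ¬ IsDiscretelyValued K)
    (ξ : OK K) (hξ₁ : (p : ℝ≥0)⁻¹ ≤ Valued.v (ξ : K)) (hξ₂ : Valued.v (ξ : K) < 1)
    (hfrob : ∀ a : OK K ⧸ Ideal.span {ξ}, ∃ b, b ^ p = a) :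
    ∀ a : OKmodp p K, ∃ b, b ^ p = a := by
  have hprime : p.Prime := Fact.out
  have hpR : (0:ℝ≥0) < (p:ℝ≥0) := by exact_mod_cast hprime.pos
  have hpinv0 : (0:ℝ≥0) < (p:ℝ≥0)⁻¹ := by positivity
  set t : ℝ≥0 := Valued.v (ξ : K) with htdef
  have ht0 : 0 < t := lt_of_lt_of_le hpinv0 hξ₁
  have ht1 : t < 1 := hξ₂
  have hξK0 : (ξ : K) ≠ 0 := by
    intro h
    rw [h, map_zero] at htdef
    exact ht0.ne' htdef
  -- the value group is dense (since K is not discretely valued)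
  have hdense : ∀ A B : ℝ≥0, 0 < A → A < B →
      ∃ l : K, l ≠ 0 ∧ A < Valued.v l ∧ Valued.v l < B := by
    set S : AddSubgroup ℝ :=
      { carrier := {r : ℝ | ∃ x : K, x ≠ 0 ∧ Real.log ((Valued.v x : ℝ≥0) : ℝ) = r}
        zero_mem' := ⟨1, one_ne_zero, by simp⟩
        add_mem' := by
          rintro r s ⟨x, hx, rfl⟩ ⟨y, hy, rfl⟩
          refine ⟨x * y, mul_ne_zero hx hy, ?_⟩
          have hvx : ((Valued.v x : ℝ≥0) : ℝ) ≠ 0 := by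
            exact_mod_cast (Valued.v.ne_zero_iff).mpr hx
          have hvy : ((Valued.v y : ℝ≥0) : ℝ) ≠ 0 := by
            exact_mod_cast (Valued.v.ne_zero_iff).mpr hy
          rw [map_mul, NNReal.coe_mul, Real.log_mul hvx hvy]
        neg_mem' := by
          rintro r ⟨x, hx, rfl⟩
          refine ⟨x⁻¹, inv_ne_zero hx, ?_⟩
          rw [map_inv₀, NNReal.coe_inv, Real.log_inv] } with hSdef
    rcases S.dense_or_cyclic with hS | ⟨a, ha⟩
    · -- dense case
      intro A B hA hAB
      have hB : (0:ℝ) < B := lt_of_lt_of_le (by exact_mod_cast hA) (by exact_mod_cast hAB.le)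
      have hlog : Real.log A < Real.log B := by
        rw [Real.log_lt_log_iff (by exact_mod_cast hA) hB]
        exact_mod_cast hAB
      obtain ⟨s, hsS, hs1, hs2⟩ := hS.exists_between hlog
      obtain ⟨l, hl0, hl⟩ := hsS
      have hvl : (0:ℝ) < ((Valued.v l : ℝ≥0) : ℝ) := by
        have := (Valued.v.ne_zero_iff).mpr hl0
        positivity
      refine ⟨l, hl0, ?_, ?_⟩
      · have h1 := hs1; rw [← hl] at h1
        have := (Real.log_lt_log_iff (by exact_mod_cast hA) hvl).mp h1
        exact_mod_cast this
      · have h2 := hs2; rw [← hl] at h2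
        have := (Real.log_lt_log_iff hvl (by exact_mod_cast hB)).mp h2
        exact_mod_cast this
    · -- cyclic case : contradiction with hnd
      exfalso
      apply hnd
      have hmemξ : Real.log t ∈ S := ⟨(ξ : K), hξK0, rfl⟩
      have hlogt : Real.log t < 0 :=
        Real.log_neg (by exact_mod_cast ht0) (by exact_mod_cast ht1)
      by_cases ha0 : a = 0
      · exfalso
        rw [ha, ha0] at hmemξ
        rw [AddSubgroup.mem_closure_singleton] at hmemξ
        obtain ⟨n, hn⟩ := hmemξ
        simp only [smul_zero] at hn
        exact hlogt.ne hn.symm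
      · refine ⟨Real.toNNReal (Real.exp (-|a|)), ?_, ?_⟩
        · rw [← NNReal.coe_lt_coe, Real.coe_toNNReal _ (Real.exp_pos _).le, NNReal.coe_one]
          rw [Real.exp_lt_one_iff]
          simpa using ha0
        · intro x hx
          have hmx : Real.log ((Valued.v x : ℝ≥0) : ℝ) ∈ S := ⟨x, hx, rfl⟩
          rw [ha, AddSubgroup.mem_closure_singleton] at hmx
          obtain ⟨n, hn⟩ := hmx
          refine ⟨if 0 ≤ a then -n else n, ?_⟩
          have hvx : (0:ℝ) < ((Valued.v x : ℝ≥0) : ℝ) := by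
            have := (Valued.v.ne_zero_iff).mpr hx
            positivity
          have hγ : ((Real.toNNReal (Real.exp (-|a|))) : ℝ) = Real.exp (-|a|) :=
            Real.coe_toNNReal _ (Real.exp_pos _).le
          have key : ((if 0 ≤ a then -n else n : ℤ) : ℝ) * (-|a|) = n * a := by
            rcases le_or_gt 0 a with h | h
            · rw [if_pos h, abs_of_nonneg h]; push_cast; ring
            · rw [if_neg (not_le.mpr h), abs_of_neg h]; push_cast; ring
          have hmain : (((Valued.v x : ℝ≥0) : ℝ))
              = (Real.exp (-|a|)) ^ (if 0 ≤ a then -n else n : ℤ) := by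
            rw [← Real.exp_log hvx, ← hn,
              ← Real.exp_log (zpow_pos (Real.exp_pos (-|a|)) _ :
                (0:ℝ) < (Real.exp (-|a|)) ^ (if 0 ≤ a then -n else n : ℤ)),
              Real.log_zpow, Real.log_exp, key]
            norm_num
          apply NNReal.coe_injective
          rw [NNReal.coe_zpow, hγ, hmain]
  -- Frobenius surjectivity mod ξ, in terms of the valuation on K
  have hF : ∀ x : K, Valued.v x ≤ 1 → ∃ w : K, Valued.v w ≤ 1 ∧ Valued.v (x - w ^ p) ≤ t := by
    intro x hx
    obtain ⟨b, hb⟩ := hfrob (Ideal.Quotient.mk _ (⟨x, hx⟩ : OK K))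
    obtain ⟨B, rfl⟩ := Ideal.Quotient.mk_surjective b
    rw [← map_pow, Ideal.Quotient.eq] at hb
    rw [Ideal.mem_span_singleton'] at hb
    obtain ⟨c, hc⟩ := hb
    have hcK : (c : K) * (ξ : K) = (B : K) ^ p - x := by
      have := congrArg (Subtype.val) hc
      push_cast at this
      exact this
    refine ⟨(B : K), B.2, ?_⟩
    rw [Valued.v.map_sub_swap, ← hcK, map_mul]
    calc Valued.v (c : K) * t ≤ 1 * t := mul_le_mul_left c.2 t
    _ = t := one_mul t
  -- the contraction constant
  set q : ℝ≥0 := (t + 1) / 2 with hqdef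
  have h20 : (0:ℝ≥0) < 2 := by norm_num
  have htq : t < q := by
    rw [hqdef, lt_div_iff₀ h20, mul_two]
    exact add_lt_add_right ht1 t
  have hq1 : q < 1 := by
    rw [hqdef, div_lt_one h20]
    calc t + 1 < 1 + 1 := add_lt_add_left ht1 1
    _ = 2 := one_add_one_eq_two
  have hq0 : 0 < q := lt_trans ht0 htq
  -- main induction
  have key : ∀ n : ℕ, ∀ x : K, Valued.v x ≤ 1 →
      ∃ y : K, Valued.v y ≤ 1 ∧ Valued.v (x - y ^ p) ≤ max (q ^ n * t) ((p:ℝ≥0)⁻¹) := by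
    intro n
    induction n with
    | zero =>
      intro x hx
      obtain ⟨w, hw, hwt⟩ := hF x hx
      exact ⟨w, hw, le_trans hwt (by rw [pow_zero, one_mul]; exact le_max_left _ _)⟩
    | succ n ih =>
      intro x hx
      obtain ⟨y, hy, hyx⟩ := ih x hx
      set e : K := x - y ^ p with hedef
      by_cases he : e = 0
      · refine ⟨y, hy, ?_⟩
        rw [← hedef, he, map_zero]
        exact zero_le
      · set E : ℝ≥0 := Valued.v e with hEdef
        have hE0 : 0 < E := by
          rw [hEdef]
          exact (zero_lt_iff).mpr ((Valued.v.ne_zero_iff).mpr he)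
        rcases le_or_gt E ((p:ℝ≥0)⁻¹) with hle | hgt
        · exact ⟨y, hy, le_trans hle (le_max_right _ _)⟩
        · have hEqnt : E ≤ q ^ n * t := by
            rcases le_max_iff.mp hyx with h | h
            · exact h
            · exact absurd h (not_le.mpr hgt)
          have hEt : E ≤ t := le_trans hEqnt (by
            calc q ^ n * t ≤ 1 * t := by
                  apply mul_le_mul_left
                  exact pow_le_one₀ zero_le hq1.le
            _ = t := one_mul t)
          -- choose l with E ≤ (v l)^p ≤ (q/t) * E
          have hpRne : ((p:ℝ)) ≠ 0 := by exact_mod_cast hprime.pos.ne'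
          have hqt1 : (1:ℝ≥0) < q / t := (one_lt_div ht0).mpr htq
          have hEltE : E < (q / t) * E := (lt_mul_iff_one_lt_left hE0).mpr hqt1
          obtain ⟨l, hl0, hlo, hhi⟩ := hdense (E ^ ((p:ℝ)⁻¹)) (((q / t) * E) ^ ((p:ℝ)⁻¹))
            (NNReal.rpow_pos hE0)
            (NNReal.rpow_lt_rpow hEltE (by positivity))
          have hlE : E ≤ (Valued.v l) ^ p := by
            calc E = (E ^ ((p:ℝ)⁻¹)) ^ (p:ℕ) := (aux_rpow_inv_pow hpRne E).symm
            _ ≤ (Valued.v l) ^ p := pow_le_pow_left' hlo.le p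
          have hlqE : (Valued.v l) ^ p ≤ (q / t) * E := by
            calc (Valued.v l) ^ p ≤ ((((q / t) * E) ^ ((p:ℝ)⁻¹))) ^ (p:ℕ) :=
                  pow_le_pow_left' hhi.le p
            _ = (q / t) * E := aux_rpow_inv_pow hpRne _
          have hqtEq : (q / t) * E * t ≤ q ^ (n+1) * t := by
            have h1 : (q / t) * E * t = q * E := by
              rw [mul_right_comm, div_mul_cancel₀ q ht0.ne']
            rw [h1, pow_succ, mul_comm (q ^ n) q, mul_assoc]
            exact mul_le_mul_right hEqnt q
          have hlplt1 : (Valued.v l) ^ p < 1 := by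
            apply lt_of_le_of_lt hlqE
            calc (q / t) * E ≤ (q / t) * t := mul_le_mul_right hEt _
            _ = q := div_mul_cancel₀ q ht0.ne'
            _ < 1 := hq1
          have hvl1 : Valued.v l ≤ 1 := by
            by_contra hcon
            push_neg at hcon
            exact absurd hlplt1 (not_lt.mpr (one_le_pow₀ hcon.le))
          have hlp0 : l ^ p ≠ 0 := pow_ne_zero p hl0
          set A : K := e / l ^ p with hAdef
          have hvA : Valued.v A ≤ 1 := by
            rw [hAdef, map_div₀, map_pow]
            exact div_le_one_of_le₀ hlE zero_le
          obtain ⟨w, hw, hwa⟩ := hF A hvA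
          set u : K := l * w with hudef
          have hvu : Valued.v u ≤ 1 := by
            rw [hudef, map_mul]
            calc Valued.v l * Valued.v w ≤ 1 * 1 := mul_le_mul' hvl1 hw
            _ = 1 := one_mul 1
          -- binomial with integral middle terms
          obtain ⟨r, hr⟩ : ∃ r : OK K, ((⟨y, hy⟩ : OK K) + ⟨u, hvu⟩) ^ p
              = (⟨y, hy⟩ : OK K) ^ p + (⟨u, hvu⟩ : OK K) ^ p + (p : OK K) * r := by
            obtain ⟨r0, h0⟩ := Commute.exists_add_pow_prime_eq hprime
              (Commute.all (⟨y, hy⟩ : OK K) (⟨u, hvu⟩ : OK K))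
            exact ⟨(⟨y, hy⟩ : OK K) * ⟨u, hvu⟩ * r0, by rw [h0]; ring⟩
          have hrK : (y + u) ^ p = y ^ p + u ^ p + (p : K) * (r : K) := by
            have := congrArg (Subtype.val) hr
            push_cast at this
            exact this
          refine ⟨y + u, ?_, ?_⟩
          · have := Valued.v.map_add y u
            exact le_trans this (max_le hy hvu)
          · have hsplit : x - (y + u) ^ p = (e - u ^ p) - (p : K) * (r : K) := by
              rw [hrK, hedef]; ring
            rw [hsplit]
            apply le_trans (Valued.v.map_sub _ _)
            apply max_le
            · -- v (e - u^p) ≤ q^(n+1) * t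
              have hfact : e - u ^ p = l ^ p * (A - w ^ p) := by
                rw [hAdef, hudef, mul_sub, mul_div_cancel₀ _ hlp0, mul_pow]
              rw [hfact, map_mul, map_pow]
              apply le_max_of_le_left
              calc (Valued.v l) ^ p * Valued.v (A - w ^ p)
                  ≤ ((q / t) * E) * t := mul_le_mul' hlqE hwa
              _ ≤ q ^ (n+1) * t := hqtEq
            · apply le_max_of_le_right
              rw [map_mul, hp]
              calc ((p:ℝ≥0))⁻¹ * Valued.v (r : K) ≤ ((p:ℝ≥0))⁻¹ * 1 :=
                    mul_le_mul_right r.2 _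
              _ = ((p:ℝ≥0))⁻¹ := mul_one _
  -- conclude
  obtain ⟨N, hN⟩ : ∃ N : ℕ, q ^ N * t ≤ (p:ℝ≥0)⁻¹ := by
    obtain ⟨N, hN⟩ := exists_pow_lt_of_lt_one hpinv0 hq1
    refine ⟨N, le_trans ?_ hN.le⟩
    calc q ^ N * t ≤ q ^ N * 1 := mul_le_mul_right ht1.le _
    _ = q ^ N := mul_one _
  intro a
  obtain ⟨A, rfl⟩ := Ideal.Quotient.mk_surjective a
  obtain ⟨y, hy, hyA⟩ := key N (A : K) A.2
  have hfinal : Valued.v ((A : K) - y ^ p) ≤ (p:ℝ≥0)⁻¹ :=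
    le_trans hyA (max_le hN le_rfl)
  have hpK0 : (p : K) ≠ 0 := by
    intro h
    rw [h, map_zero] at hp
    exact hpinv0.ne' hp.symm
  have hqmem : Valued.v ((y ^ p - (A : K)) / (p : K)) ≤ 1 := by
    rw [map_div₀, hp, Valued.v.map_sub_swap]
    exact (div_le_one hpinv0).mpr hfinal
  refine ⟨Ideal.Quotient.mk _ (⟨y, hy⟩ : OK K), ?_⟩
  rw [← map_pow, Ideal.Quotient.eq, Ideal.mem_span_singleton']
  refine ⟨⟨(y ^ p - (A : K)) / (p : K), hqmem⟩, ?_⟩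
  apply Subtype.ext
  push_cast
  rw [div_mul_cancel₀ _ hpK0]
end

section
/- Let F be a perfect analytic field of characteristic p and r > 0. The ring W^{r-}(F) = { x ∈ W(F) : |x|_r < ∞ } is complete with respect to the norm |·|_r. -/
open scoped NNReal ENNReal

set_option synthInstance.maxHeartbeats 1000000
set_option maxHeartbeats 1000000

set_option linter.unusedSectionVars false

open Filter MvPolynomial

namespace GaussAux

variable {p : ℕ} [hp : Fact p.Prime]

/-- the weight function for our grading -/
def W2 (p : ℕ) : Fin 2 × ℕ → ℕ := fun q => p ^ q.2

lemma isWH_rename_witt (b : Fin 2) (n : ℕ) :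
    IsWeightedHomogeneous (W2 p) (rename (Prod.mk b) (wittPolynomial p ℤ n)) (p ^ n) := by
  rw [wittPolynomial, map_sum, ← mem_weightedHomogeneousSubmodule ℤ]
  apply Submodule.sum_mem
  intro i hi
  rw [mem_weightedHomogeneousSubmodule, rename_monomial]
  apply isWeightedHomogeneous_monomial
  rw [Finsupp.mapDomain_single, Finsupp.weight_apply, Finsupp.sum_single_index]
  · show p ^ (n - i) * p ^ i = p ^ n
    rw [← pow_add]
    congr 1
    have := Finset.mem_range.1 hi
    omega
  · simp

lemma IsWH.pow {σ : Type*} {w : σ → ℕ} {φ : MvPolynomial σ ℤ} {m : ℕ} (k : ℕ)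
    (h : IsWeightedHomogeneous w φ m) : IsWeightedHomogeneous w (φ ^ k) (k * m) := by
  induction k with
  | zero => simpa using isWeightedHomogeneous_one ℤ w
  | succ k ih =>
      rw [pow_succ, Nat.succ_mul]
      exact ih.mul h

lemma IsWH.neg {σ : Type*} {w : σ → ℕ} {φ : MvPolynomial σ ℤ} {m : ℕ}
    (h : IsWeightedHomogeneous w φ m) : IsWeightedHomogeneous w (-φ) m := by
  intro d hd
  exact h (by simpa using hd)

lemma IsWH.of_C_mul {σ : Type*} {w : σ → ℕ} {φ : MvPolynomial σ ℤ} {m : ℕ} {c : ℤ} (hc : c ≠ 0)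
    (h : IsWeightedHomogeneous w (C c * φ) m) : IsWeightedHomogeneous w φ m := by
  intro d hd
  apply h
  rw [coeff_C_mul]
  exact mul_ne_zero hc hd

lemma wittSub_key (n : ℕ) :
    C ((p : ℤ) ^ n) * WittVector.wittSub p n =
      (rename (Prod.mk (0 : Fin 2)) (wittPolynomial p ℤ n)
        - rename (Prod.mk (1 : Fin 2)) (wittPolynomial p ℤ n))
      - ∑ i ∈ Finset.range n, C ((p : ℤ) ^ i) * WittVector.wittSub p i ^ p ^ (n - i) := by
  have h := wittStructureInt_prop p (X (0 : Fin 2) - X 1) n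
  rw [bind₁, aeval_wittPolynomial, map_sub, bind₁_X_right, bind₁_X_right,
    Finset.sum_range_succ] at h
  have hC : ∀ i : ℕ, ((p : MvPolynomial (Fin 2 × ℕ) ℤ)) ^ i = C ((p : ℤ) ^ i) := by
    intro i; rw [map_pow, map_natCast]
  simp only [hC] at h
  have hsub : WittVector.wittSub p = wittStructureInt p (X 0 - X 1) := rfl
  rw [hsub]
  simp only [Nat.sub_self, pow_zero, pow_one] at h
  linear_combination h

lemma wittSub_isWH (n : ℕ) : IsWeightedHomogeneous (W2 p) (WittVector.wittSub p n) (p ^ n) := by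
  induction n using Nat.strong_induction_on with
  | _ n IH =>
    have hpn : ((p : ℤ) ^ n) ≠ 0 := pow_ne_zero _ (by exact_mod_cast hp.out.ne_zero)
    apply IsWH.of_C_mul hpn
    rw [wittSub_key]
    have h1 : IsWeightedHomogeneous (W2 p)
        (rename (Prod.mk (0 : Fin 2)) (wittPolynomial p ℤ n)
          - rename (Prod.mk (1 : Fin 2)) (wittPolynomial p ℤ n)) (p ^ n) := by
      rw [sub_eq_add_neg]
      exact (isWH_rename_witt 0 n).add (IsWH.neg (isWH_rename_witt 1 n))
    have h2 : IsWeightedHomogeneous (W2 p)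
        (∑ i ∈ Finset.range n, C ((p : ℤ) ^ i) * WittVector.wittSub p i ^ p ^ (n - i)) (p ^ n) := by
      rw [← mem_weightedHomogeneousSubmodule ℤ]
      apply Submodule.sum_mem
      intro i hi
      rw [mem_weightedHomogeneousSubmodule]
      have h3 := (isWeightedHomogeneous_C (W2 p) ((p : ℤ) ^ i)).mul
        (IsWH.pow (p ^ (n - i)) (IH i (Finset.mem_range.1 hi)))
      rw [zero_add, ← pow_add] at h3
      have : n - i + i = n := by have := Finset.mem_range.1 hi; omega
      rwa [this] at h3
    rw [sub_eq_add_neg]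
    exact h1.add (IsWH.neg h2)

end GaussAux


namespace GaussAux

variable {p : ℕ} [hp : Fact p.Prime]
open MvPolynomial Finsupp

lemma coeff_single_rename (b b' : Fin 2) (n : ℕ) :
    coeff (Finsupp.single (b, n) 1) (rename (Prod.mk b') (wittPolynomial p ℤ n)) =
      if b = b' then (p : ℤ) ^ n else 0 := by
  rw [wittPolynomial, map_sum]
  simp only [rename_monomial, Finsupp.mapDomain_single]
  rw [MvPolynomial.coeff_sum]
  simp only [coeff_monomial]
  rcases eq_or_ne b b' with rfl | hbb
  · rw [if_pos rfl]
    rw [Finset.sum_eq_single n]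
    · simp
    · intro i hi hin
      rw [if_neg]
      intro hEq
      have h2 := DFunLike.congr_fun hEq (b, n)
      rw [Finsupp.single_eq_same, Finsupp.single_eq_of_ne' (by simp [hin])] at h2
      have : 0 < p ^ (n - i) := pow_pos hp.out.pos _
      omega
    · intro h
      exact absurd (Finset.self_mem_range_succ n) h
  · rw [if_neg hbb]
    apply Finset.sum_eq_zero
    intro i _
    rw [if_neg]
    intro hEq
    have h2 := DFunLike.congr_fun hEq (b, n)
    rw [Finsupp.single_eq_same, Finsupp.single_eq_of_ne' (by simp [Ne.symm hbb])] at h2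
    exact one_ne_zero h2.symm

lemma coeff_single_pow_eq_zero {b : Fin 2} {i n k : ℕ} (hin : i < n) :
    coeff (Finsupp.single (b, n) 1) (WittVector.wittSub p i ^ k) = 0 := by
  by_contra h
  have hv : (b, n) ∈ (WittVector.wittSub p i ^ k).vars :=
    (mem_vars _).2 ⟨_, MvPolynomial.mem_support_iff.2 h, by simp⟩
  have hv2 := vars_pow (WittVector.wittSub p i) k hv
  have hv3 := wittStructureInt_vars (p := p) (X (0 : Fin 2) - X 1) i hv2
  rw [Finset.mem_product, Finset.mem_range] at hv3
  omega

lemma coeff_single_wittSub (b : Fin 2) (n : ℕ) :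
    coeff (Finsupp.single (b, n) 1) (WittVector.wittSub p n) =
      if b = 0 then 1 else -1 := by
  have h := congrArg (coeff (Finsupp.single (b, n) 1)) (wittSub_key (p := p) n)
  rw [coeff_C_mul, coeff_sub, coeff_sub, MvPolynomial.coeff_sum] at h
  simp only [coeff_C_mul] at h
  rw [coeff_single_rename, coeff_single_rename] at h
  have hz : ∀ i ∈ Finset.range n,
      (p : ℤ) ^ i * coeff (Finsupp.single (b, n) 1) (WittVector.wittSub p i ^ p ^ (n - i)) = 0 := by
    intro i hi
    rw [coeff_single_pow_eq_zero (Finset.mem_range.1 hi), mul_zero]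
  rw [Finset.sum_congr rfl hz, Finset.sum_const_zero, sub_zero] at h
  have hpn : ((p : ℤ) ^ n) ≠ 0 := pow_ne_zero _ (by exact_mod_cast hp.out.ne_zero)
  apply mul_left_cancel₀ hpn
  rw [h]
  fin_cases b <;> simp

/-- the "lower order" part of the Witt subtraction polynomial -/
noncomputable def Rn (p : ℕ) [Fact p.Prime] (n : ℕ) : MvPolynomial (Fin 2 × ℕ) ℤ :=
  WittVector.wittSub p n - (X ((0 : Fin 2), n) - X ((1 : Fin 2), n))

lemma vars_Rn (n : ℕ) : (Rn p n).vars ⊆ Finset.univ ×ˢ Finset.range n := by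
  intro t ht
  obtain ⟨b, m⟩ := t
  obtain ⟨d, hd, htd⟩ := (mem_vars _).1 ht
  rw [MvPolynomial.mem_support_iff] at hd
  have hcoeff : ∀ d', coeff d' (Rn p n) =
      coeff d' (WittVector.wittSub p n)
        - ((if Finsupp.single ((0 : Fin 2), n) 1 = d' then 1 else 0)
          - (if Finsupp.single ((1 : Fin 2), n) 1 = d' then 1 else 0)) := by
    intro d'
    rw [Rn, coeff_sub, coeff_sub, coeff_X', coeff_X']
  have hd0 : d ≠ Finsupp.single ((0 : Fin 2), n) 1 := by
    rintro rfl
    apply hd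
    rw [hcoeff, coeff_single_wittSub]
    simp [Finsupp.single_eq_single_iff]
  have hd1 : d ≠ Finsupp.single ((1 : Fin 2), n) 1 := by
    rintro rfl
    apply hd
    rw [hcoeff, coeff_single_wittSub]
    simp [Finsupp.single_eq_single_iff]
  have hdW : coeff d (WittVector.wittSub p n) ≠ 0 := by
    intro h0
    apply hd
    rw [hcoeff, h0, if_neg (fun h => hd0 h.symm), if_neg (fun h => hd1 h.symm)]
    ring
  have htn : m ≤ n := by
    have hv : (b, m) ∈ (WittVector.wittSub p n).vars :=
      (mem_vars _).2 ⟨d, MvPolynomial.mem_support_iff.2 hdW, htd⟩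
    have := wittStructureInt_vars (p := p) (X (0 : Fin 2) - X 1) n hv
    rw [Finset.mem_product, Finset.mem_range] at this
    omega
  have hw : (Finsupp.weight (W2 p)) d = p ^ n := wittSub_isWH n hdW
  rw [Finsupp.weight_apply, Finsupp.sum] at hw
  rcases lt_or_eq_of_le htn with hlt | heq
  · exact Finset.mem_product.2 ⟨Finset.mem_univ _, Finset.mem_range.2 hlt⟩
  · exfalso
    subst heq
    have hterm : d (b, m) • W2 p (b, m) = d (b, m) * p ^ m := by
      rw [smul_eq_mul, W2]
    have hle : d (b, m) * p ^ m ≤ p ^ m := by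
      rw [← hterm, ← hw]
      exact Finset.single_le_sum (f := fun s => d s • W2 p s) (fun s _ => zero_le) htd
    have hdt1 : d (b, m) = 1 := by
      have h1 : 1 ≤ d (b, m) := Nat.one_le_iff_ne_zero.2 (Finsupp.mem_support_iff.1 htd)
      have hppos : 0 < p ^ m := pow_pos hp.out.pos _
      nlinarith
    have hrest : ∑ s ∈ d.support.erase (b, m), d s • W2 p s = 0 := by
      have h2 := Finset.add_sum_erase _ (fun s => d s • W2 p s) htd
      beta_reduce at h2
      rw [hterm, hdt1, one_mul, hw] at h2
      omega
    have hsupp : d.support ⊆ {(b, m)} := by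
      intro s hs
      rw [Finset.mem_singleton]
      by_contra hst
      have hs' : s ∈ d.support.erase (b, m) := Finset.mem_erase.2 ⟨hst, hs⟩
      have h3 := (Finset.sum_eq_zero_iff.1 hrest) s hs'
      rw [smul_eq_mul] at h3
      have hds : d s = 0 := by
        rcases Nat.mul_eq_zero.1 h3 with h | h
        · exact h
        · exact absurd h (pow_pos hp.out.pos _).ne'
      exact Finsupp.mem_support_iff.1 hs hds
    have hdsingle : d = Finsupp.single (b, m) 1 := by
      have h4 := Finsupp.support_subset_singleton.1 hsupp
      rwa [hdt1] at h4
    fin_cases b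
    · exact hd0 hdsingle
    · exact hd1 hdsingle

end GaussAux


/-- The Gauss norm `|Σ pⁿ [x̄_n]|_r = sup_n p⁻ⁿ (|x̄_n|')^r` on `W(F)` for `F` a perfect
analytic field of characteristic `p`: in Witt coordinates the `n`-th Teichmüller
coordinate is `x̄_n = (x.coeff n)^(p⁻ⁿ)`, so `(|x̄_n|')^r = |x.coeff n|^(r·p⁻ⁿ)`.
The value is taken in `[0, +∞]`. -/
noncomputable def gaussNorm (p : ℕ) [Fact p.Prime] (F : Type*) [Field F] [Valued F ℝ≥0]
    (r : ℝ) (x : WittVector p F) : ℝ≥0∞ :=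
  ⨆ n : ℕ, ((p : ℝ≥0∞)⁻¹ ^ n) *
    (((Valued.v (x.coeff n) : ℝ≥0) : ℝ≥0∞) ^ (r * ((p : ℝ)⁻¹ ^ n)))


namespace GaussAux

open MvPolynomial Filter
open scoped NNReal ENNReal

variable {p : ℕ} [hp : Fact p.Prime] {F : Type*} [Field F] [Valued F ℝ≥0] {r : ℝ}

lemma term_le_iff (hr : 0 < r) (c : ℝ≥0∞) (a : F) (n : ℕ) :
    ((p : ℝ≥0∞)⁻¹ ^ n) * (((Valued.v a : ℝ≥0) : ℝ≥0∞) ^ (r * ((p : ℝ)⁻¹ ^ n))) ≤ c ↔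
      ((Valued.v a : ℝ≥0) : ℝ≥0∞) ≤ (c * (p : ℝ≥0∞) ^ n) ^ (((p : ℝ) ^ n) / r) := by
  have hp0 : (p : ℝ≥0∞) ≠ 0 := by exact_mod_cast hp.out.ne_zero
  have hpt : (p : ℝ≥0∞) ≠ ⊤ := ENNReal.natCast_ne_top p
  have hppos : (0 : ℝ) < (p : ℝ) := by exact_mod_cast hp.out.pos
  have hs : (0 : ℝ) < r * ((p : ℝ)⁻¹ ^ n) := by positivity
  have h1 : ((p : ℝ≥0∞)⁻¹ ^ n) * (((Valued.v a : ℝ≥0) : ℝ≥0∞) ^ (r * ((p : ℝ)⁻¹ ^ n))) ≤ c ↔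
      (((Valued.v a : ℝ≥0) : ℝ≥0∞) ^ (r * ((p : ℝ)⁻¹ ^ n))) ≤ c * (p : ℝ≥0∞) ^ n := by
    rw [← ENNReal.inv_pow, ← ENNReal.div_eq_inv_mul,
      ENNReal.div_le_iff (pow_ne_zero _ hp0) (ENNReal.pow_ne_top hpt)]
  rw [h1]
  have hexp : ((p : ℝ) ^ n) / r = 1 / (r * ((p : ℝ)⁻¹ ^ n)) := by
    rw [inv_pow]
    field_simp
  rw [hexp, one_div]
  constructor
  · intro h
    have h2 := ENNReal.rpow_le_rpow h (inv_nonneg.2 hs.le)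
    rwa [← ENNReal.rpow_mul, mul_inv_cancel₀ hs.ne', ENNReal.rpow_one] at h2
  · intro h
    have h2 := ENNReal.rpow_le_rpow h hs.le
    rwa [← ENNReal.rpow_mul, inv_mul_cancel₀ hs.ne', ENNReal.rpow_one] at h2

lemma val_intCast_le_one (k : ℤ) : Valued.v ((k : ℤ) : F) ≤ (1 : ℝ≥0) := by
  have hnat : ∀ m : ℕ, Valued.v ((m : ℕ) : F) ≤ (1 : ℝ≥0) := by
    intro m
    induction m with
    | zero => simp
    | succ m ih =>
        push_cast
        refine le_trans (Valued.v.map_add _ _) (max_le ih ?_)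
        simp
  rcases k.eq_nat_or_neg with ⟨m, rfl | rfl⟩
  · exact_mod_cast hnat m
  · push_cast
    rw [Valuation.map_neg]
    exact_mod_cast hnat m

lemma val_aeval_le {n : ℕ} {φ : MvPolynomial (Fin 2 × ℕ) ℤ}
    (hφ : IsWeightedHomogeneous (W2 p) φ (p ^ n)) (g : Fin 2 × ℕ → F) (K : ℝ≥0∞)
    (hg : ∀ q : Fin 2 × ℕ, q.2 ≤ n → ((Valued.v (g q) : ℝ≥0) : ℝ≥0∞) ≤ K ^ (p ^ q.2)) :
    ((Valued.v (aeval g φ) : ℝ≥0) : ℝ≥0∞) ≤ K ^ (p ^ n) := by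
  rcases eq_or_ne K ⊤ with rfl | hK
  · rw [ENNReal.top_pow (pow_pos hp.out.pos n).ne']
    exact le_top
  lift K to ℝ≥0 using hK
  rw [← ENNReal.coe_pow, ENNReal.coe_le_coe]
  rw [aeval_def, eval₂_eq]
  apply Valuation.map_sum_le
  intro d hd
  have hwd : (Finsupp.weight (W2 p)) d = p ^ n := hφ (MvPolynomial.mem_support_iff.1 hd)
  rw [Valuation.map_mul]
  have h1 : Valued.v (algebraMap ℤ F (coeff d φ)) ≤ 1 := val_intCast_le_one _
  calc Valued.v (algebraMap ℤ F (coeff d φ)) * Valued.v (∏ s ∈ d.support, g s ^ d s)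
      ≤ 1 * Valued.v (∏ s ∈ d.support, g s ^ d s) := mul_le_mul_left h1 _
    _ = Valued.v (∏ s ∈ d.support, g s ^ d s) := one_mul _
    _ ≤ K ^ p ^ n := ?_
  rw [map_prod]
  simp only [map_pow]
  calc ∏ s ∈ d.support, Valued.v (g s) ^ d s
      ≤ ∏ s ∈ d.support, (K ^ p ^ s.2) ^ d s := ?_
    _ = ∏ s ∈ d.support, K ^ (p ^ s.2 * d s) := by simp only [← pow_mul]
    _ = K ^ (∑ s ∈ d.support, p ^ s.2 * d s) := Finset.prod_pow_eq_pow_sum _ _ _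
    _ = K ^ p ^ n := ?_
  · apply Finset.prod_le_prod' 
    intro s hs
    have hs2 : s.2 ≤ n := by
      have h2 : p ^ s.2 ≤ p ^ n := by
        calc p ^ s.2 ≤ d s * p ^ s.2 :=
              Nat.le_mul_of_pos_left _ (Nat.pos_of_ne_zero (Finsupp.mem_support_iff.1 hs))
          _ ≤ (Finsupp.weight (W2 p)) d := by
              rw [Finsupp.weight_apply, Finsupp.sum]
              exact Finset.single_le_sum (f := fun s => d s • W2 p s)
                (fun s _ => zero_le) hs
          _ = p ^ n := hwd
      exact (Nat.pow_le_pow_iff_right hp.out.one_lt).1 h2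
    have := hg s hs2
    rw [← ENNReal.coe_pow, ENNReal.coe_le_coe] at this
    exact pow_le_pow_left₀ zero_le this _
  · congr 1
    rw [← hwd, Finsupp.weight_apply, Finsupp.sum]
    apply Finset.sum_congr rfl
    intro s _
    rw [smul_eq_mul, W2, mul_comm]

end GaussAux


namespace GaussAux

open MvPolynomial Filter
open scoped NNReal ENNReal

variable {p : ℕ} [hp : Fact p.Prime] {F : Type*} [Field F] [Valued F ℝ≥0] {r : ℝ}

lemma coeff_le_K (hr : 0 < r) {c : ℝ≥0∞} {i n : ℕ} (hin : i ≤ n) {a : F}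
    (h : ((p : ℝ≥0∞)⁻¹ ^ i) * (((Valued.v a : ℝ≥0) : ℝ≥0∞) ^ (r * ((p : ℝ)⁻¹ ^ i))) ≤ c) :
    ((Valued.v a : ℝ≥0) : ℝ≥0∞) ≤ ((c * (p : ℝ≥0∞) ^ n) ^ (1 / r)) ^ (p ^ i) := by
  have hple : (p : ℝ≥0∞) ^ i ≤ (p : ℝ≥0∞) ^ n :=
    pow_le_pow_right₀ (by exact_mod_cast hp.out.one_le) hin
  have h2 : ((Valued.v a : ℝ≥0) : ℝ≥0∞) ≤ (c * (p : ℝ≥0∞) ^ n) ^ (((p : ℝ) ^ i) / r) := by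
    refine le_trans ((term_le_iff hr c a i).1 h) ?_
    exact ENNReal.rpow_le_rpow (mul_le_mul_right hple c) (by positivity)
  refine le_trans h2 (le_of_eq ?_)
  rw [← ENNReal.rpow_natCast ((c * (p : ℝ≥0∞) ^ n) ^ (1 / r)) (p ^ i), ← ENNReal.rpow_mul]
  congr 1
  push_cast
  field_simp

lemma gaussNorm_sub_le (hr : 0 < r) (x y : WittVector p F) :
    gaussNorm p F r (x - y) ≤ max (gaussNorm p F r x) (gaussNorm p F r y) := by
  set c := max (gaussNorm p F r x) (gaussNorm p F r y) with hc
  rw [gaussNorm]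
  apply iSup_le
  intro n
  rw [term_le_iff hr]
  have hK : (c * (p : ℝ≥0∞) ^ n) ^ (((p : ℝ) ^ n) / r)
      = ((c * (p : ℝ≥0∞) ^ n) ^ (1 / r)) ^ (p ^ n) := by
    rw [← ENNReal.rpow_natCast ((c * (p : ℝ≥0∞) ^ n) ^ (1 / r)) (p ^ n), ← ENNReal.rpow_mul]
    congr 1
    push_cast
    field_simp
  rw [hK, WittVector.sub_coeff]
  show ((Valued.v (aeval (Function.uncurry ![x.coeff, y.coeff]) (WittVector.wittSub p n)) : ℝ≥0) :
    ℝ≥0∞) ≤ _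
  apply val_aeval_le (wittSub_isWH n)
  rintro ⟨b, i⟩ hi
  have hterm : ∀ z : WittVector p F,
      ((p : ℝ≥0∞)⁻¹ ^ i) * (((Valued.v (z.coeff i) : ℝ≥0) : ℝ≥0∞) ^ (r * ((p : ℝ)⁻¹ ^ i)))
        ≤ gaussNorm p F r z := fun z => le_iSup (fun m => ((p : ℝ≥0∞)⁻¹ ^ m) *
          (((Valued.v (z.coeff m) : ℝ≥0) : ℝ≥0∞) ^ (r * ((p : ℝ)⁻¹ ^ m)))) i
  fin_cases b
  · have := coeff_le_K hr (c := c) hi (le_trans (hterm x) (le_max_left _ _))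
    simpa [Function.uncurry] using this
  · have := coeff_le_K hr (c := c) hi (le_trans (hterm y) (le_max_right _ _))
    simpa [Function.uncurry] using this

lemma val_le_of_tendsto {a : ℕ → F} {a' : F} (h : Tendsto a atTop (nhds a')) {δ : ℝ≥0}
    (hle : ∀ᶠ j in atTop, Valued.v (a j) ≤ δ) : Valued.v a' ≤ δ := by
  by_contra hgt
  push_neg at hgt
  have hne : Valued.v a' ≠ 0 := ne_of_gt (lt_of_le_of_lt zero_le hgt)
  obtain ⟨j, hj1, hj2⟩ := ((h.eventually (Valued.locally_const hne)).and hle).exists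
  rw [hj1] at hj2
  exact absurd hj2 (not_le.2 hgt)

lemma tendsto_aeval {ι : Type*} {f : Filter ι} (φ : MvPolynomial (Fin 2 × ℕ) ℤ)
    (A : ι → (Fin 2 × ℕ) → F) (A' : (Fin 2 × ℕ) → F)
    (hA : ∀ s ∈ φ.vars, Tendsto (fun i => A i s) f (nhds (A' s))) :
    Tendsto (fun i => aeval (A i) φ) f (nhds (aeval A' φ)) := by
  classical
  set t : ((Fin 2 × ℕ) → F) → ((Fin 2 × ℕ) → F) := fun B s => if s ∈ φ.vars then B s else 0
    with ht
  have he : ∀ B, aeval (t B) φ = aeval B φ := by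
    intro B
    have h1 : (aeval (t B) φ : F) = eval₂Hom (algebraMap ℤ F) (t B) φ := rfl
    have h2 : (aeval B φ : F) = eval₂Hom (algebraMap ℤ F) B φ := rfl
    rw [h1, h2]
    apply eval₂Hom_congr' rfl _ rfl
    intro s hs _
    rw [ht]
    simp only [if_pos hs]
  have heval : ∀ B : (Fin 2 × ℕ) → F,
      aeval B φ = eval B (map (Int.castRingHom F) φ) := by
    intro B
    rw [eval_map, aeval_def]
    rfl
  have hcont : Continuous fun B : (Fin 2 × ℕ) → F => eval B (map (Int.castRingHom F) φ) :=
    MvPolynomial.continuous_eval _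
  have htend : Tendsto (fun i => t (A i)) f (nhds (t A')) := by
    rw [tendsto_pi_nhds]
    intro s
    by_cases hs : s ∈ φ.vars
    · simp only [ht, if_pos hs]
      exact hA s hs
    · simp only [ht, if_neg hs]
      exact tendsto_const_nhds
  have h5 := (hcont.tendsto (t A')).comp htend
  have h6 : ((fun B => eval B (map (Int.castRingHom F) φ)) ∘ fun i => t (A i))
      = fun i => aeval (A i) φ := by
    funext i
    simp only [Function.comp, ← heval, he]
  rw [h6] at h5
  rwa [← heval, he] at h5

end GaussAux


namespace GaussAux

open MvPolynomial Filter
open scoped NNReal ENNReal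

variable {p : ℕ} [hp : Fact p.Prime] {F : Type*} [Field F] [Valued F ℝ≥0] {r : ℝ}

lemma le_gaussNorm (z : WittVector p F) (n : ℕ) :
    ((p : ℝ≥0∞)⁻¹ ^ n) * (((Valued.v (z.coeff n) : ℝ≥0) : ℝ≥0∞) ^ (r * ((p : ℝ)⁻¹ ^ n)))
      ≤ gaussNorm p F r z := by
  rw [gaussNorm]
  exact le_iSup (fun m => ((p : ℝ≥0∞)⁻¹ ^ m) *
    (((Valued.v (z.coeff m) : ℝ≥0) : ℝ≥0∞) ^ (r * ((p : ℝ)⁻¹ ^ m)))) n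

end GaussAux

/-- For `F` a perfect analytic field of characteristic `p` and `r > 0`, the ring
`W^{r-}(F) = {x ∈ W(F) : |x|_r < ∞}` is complete with respect to `|·|_r`:
every Cauchy sequence has a limit. -/
theorem gaussNorm_complete (p : ℕ) [Fact p.Prime] (F : Type*)
    [Field F] [Valued F ℝ≥0] [CompleteSpace F] [ExpChar F p] [PerfectRing F p]
    (r : ℝ) (hr : 0 < r)
    (x : ℕ → WittVector p F) (hfin : ∀ i, gaussNorm p F r (x i) ≠ ⊤)
    (hcauchy : ∀ ε : ℝ≥0∞, 0 < ε → ∃ N : ℕ, ∀ i j, N ≤ i → N ≤ j →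
      gaussNorm p F r (x i - x j) < ε) :
    ∃ L : WittVector p F, gaussNorm p F r L ≠ ⊤ ∧
      ∀ ε : ℝ≥0∞, 0 < ε → ∃ N : ℕ, ∀ i, N ≤ i → gaussNorm p F r (x i - L) < ε := by
  classical
  have hp' : Fact p.Prime := inferInstance
  have hp0 : (p : ℝ≥0∞) ≠ 0 := by exact_mod_cast hp'.out.ne_zero
  have hpt : (p : ℝ≥0∞) ≠ ⊤ := ENNReal.natCast_ne_top p
  -- Step 1: coefficientwise limits
  have key : ∀ n : ℕ, ∃ ln : F, Tendsto (fun i => (x i).coeff n) atTop (nhds ln) := by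
    intro n
    induction n using Nat.strong_induction_on with
    | _ n IH =>
    set l' : ℕ → F := fun m => if h : m < n then (IH m h).choose else 0 with hl'def
    have hl' : ∀ m, m < n → Tendsto (fun i => (x i).coeff m) atTop (nhds (l' m)) := by
      intro m hm
      have : l' m = (IH m hm).choose := by rw [hl'def]; simp only [dif_pos hm]
      rw [this]
      exact (IH m hm).choose_spec
    set A : ℕ × ℕ → (Fin 2 × ℕ) → F :=
      fun q => Function.uncurry ![(x q.1).coeff, (x q.2).coeff] with hA
    have hsub_eval : ∀ i j : ℕ,
        aeval (A (i, j)) (WittVector.wittSub p n) = (x i - x j).coeff n := by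
      intro i j; rw [WittVector.sub_coeff]; rfl
    have hX0 : ∀ i j : ℕ,
        aeval (A (i, j)) (X (((0 : Fin 2), n)) : MvPolynomial (Fin 2 × ℕ) ℤ)
          = (x i).coeff n := by
      intro i j; rw [aeval_X]; rfl
    have hX1 : ∀ i j : ℕ,
        aeval (A (i, j)) (X (((1 : Fin 2), n)) : MvPolynomial (Fin 2 × ℕ) ℤ)
          = (x j).coeff n := by
      intro i j; rw [aeval_X]; rfl
    have hdecomp : ∀ i j : ℕ, (x i).coeff n - (x j).coeff n
        = (x i - x j).coeff n - aeval (A (i, j)) (GaussAux.Rn p n) := by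
      intro i j
      have h1 : aeval (A (i, j)) (GaussAux.Rn p n)
          = (x i - x j).coeff n - ((x i).coeff n - (x j).coeff n) := by
        rw [GaussAux.Rn, map_sub, map_sub, hsub_eval, hX0, hX1]
      rw [h1]; ring
    set A' : (Fin 2 × ℕ) → F := Function.uncurry ![l', l'] with hA'
    have hRnlim : aeval A' (GaussAux.Rn p n) = 0 := by
      have e1 : aeval A' (WittVector.wittSub p n)
          = (WittVector.mk p l' - WittVector.mk p l').coeff n := by
        rw [WittVector.sub_coeff]
        show _ = aeval (Function.uncurry ![(WittVector.mk p l').coeff,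
          (WittVector.mk p l').coeff]) (WittVector.wittSub p n)
        rw [WittVector.coeff_mk]
      rw [GaussAux.Rn, map_sub, map_sub, e1, sub_self]
      have e2 : (0 : WittVector p F).coeff n = 0 := WittVector.zero_coeff p F n
      rw [e2, aeval_X, aeval_X]
      show (0 : F) - (l' n - l' n) = 0
      ring
    have hRtend : Tendsto (fun q : ℕ × ℕ => aeval (A q) (GaussAux.Rn p n))
        (atTop ×ˢ atTop) (nhds 0) := by
      rw [← hRnlim]
      apply GaussAux.tendsto_aeval
      rintro ⟨b, m⟩ hs
      have hmn : m < n := by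
        have h2 := GaussAux.vars_Rn (p := p) n hs
        rw [Finset.mem_product, Finset.mem_range] at h2
        exact h2.2
      fin_cases b
      · exact (hl' m hmn).comp
          (tendsto_fst : Tendsto Prod.fst ((atTop : Filter ℕ) ×ˢ (atTop : Filter ℕ)) atTop)
      · exact (hl' m hmn).comp
          (tendsto_snd : Tendsto Prod.snd ((atTop : Filter ℕ) ×ˢ (atTop : Filter ℕ)) atTop)
    have hcs : CauchySeq (fun i => (x i).coeff n) := by
      rw [(Valued.hasBasis_uniformity F ℝ≥0).cauchySeq_iff]
      rintro γ₀ -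
      obtain ⟨γ, hγ⟩ : ∃ γ : ℝ≥0ˣ, (γ : ℝ≥0) = MonoidWithZeroHom.ValueGroup₀.embedding γ₀.1 :=
        ⟨Units.mk0 _ (fun h => γ₀.ne_zero (MonoidWithZeroHom.ValueGroup₀.embedding_injective
          (h.trans (map_zero _).symm))), rfl⟩
      have hγ0 : (0 : ℝ≥0) < (γ : ℝ≥0) := pos_iff_ne_zero.2 (Units.ne_zero γ)
      set half : ℝ≥0 := (γ : ℝ≥0) / 2 with hhalf
      have hhalfpos : 0 < half := div_pos hγ0 two_pos
      set ε' : ℝ≥0∞ := ((half : ℝ≥0) : ℝ≥0∞) ^ (r * ((p : ℝ)⁻¹ ^ n)) * ((p : ℝ≥0∞)⁻¹ ^ n)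
        with hε'
      have hε'pos : 0 < ε' := by
        apply ENNReal.mul_pos
        · exact (ENNReal.rpow_pos (by exact_mod_cast hhalfpos) ENNReal.coe_ne_top).ne'
        · exact pow_ne_zero _ (ENNReal.inv_ne_zero.2 hpt)
      obtain ⟨N₁, hN₁⟩ := hcauchy ε' hε'pos
      have hcomp : ((ε' * (p : ℝ≥0∞) ^ n) ^ (((p : ℝ) ^ n) / r)) = ((half : ℝ≥0) : ℝ≥0∞) := by
        rw [hε', mul_assoc]
        have h4 : ((p : ℝ≥0∞)⁻¹ ^ n) * ((p : ℝ≥0∞) ^ n) = 1 := by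
          rw [← mul_pow, ENNReal.inv_mul_cancel hp0 hpt, one_pow]
        rw [h4, mul_one, ← ENNReal.rpow_mul]
        have h5 : (r * ((p : ℝ)⁻¹ ^ n)) * (((p : ℝ) ^ n) / r) = 1 := by
          have hppos : (0 : ℝ) < (p : ℝ) := by exact_mod_cast hp'.out.pos
          rw [inv_pow]
          field_simp
        rw [h5, ENNReal.rpow_one]
      have hB1 : ∀ i j, N₁ ≤ i → N₁ ≤ j →
          Valued.v ((x i - x j).coeff n) < (γ : ℝ≥0) := by
        intro i j hi hj
        have h1 : ((p : ℝ≥0∞)⁻¹ ^ n) * (((Valued.v ((x i - x j).coeff n) : ℝ≥0) : ℝ≥0∞)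
            ^ (r * ((p : ℝ)⁻¹ ^ n))) ≤ ε' :=
          le_trans (GaussAux.le_gaussNorm _ n) (hN₁ i j hi hj).le
        have h2 := (GaussAux.term_le_iff (p := p) hr ε' ((x i - x j).coeff n) n).1 h1
        rw [hcomp] at h2
        have h3 : Valued.v ((x i - x j).coeff n) ≤ half := by exact_mod_cast h2
        refine lt_of_le_of_lt h3 ?_
        rw [hhalf]
        exact NNReal.half_lt_self (Units.ne_zero γ)
      have hmem : {y : F | Valued.v y < ((γ : ℝ≥0) : ℝ≥0)} ∈ nhds (0 : F) := by
        rw [Valued.mem_nhds_zero]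
        exact ⟨γ₀, fun y hy => by rw [hγ]; exact (Valuation.restrict_lt_iff_lt_embedding _).1 hy⟩
      have hB2 := hRtend.eventually hmem
      rw [prod_atTop_atTop_eq] at hB2
      obtain ⟨Q, hQ⟩ := eventually_atTop.1 hB2
      refine ⟨max N₁ (max Q.1 Q.2), ?_⟩
      intro i hi j hj
      show Valued.v.restrict ((x j).coeff n - (x i).coeff n) < γ₀.1
      rw [Valuation.restrict_lt_iff_lt_embedding, ← hγ]
      rw [hdecomp j i]
      refine lt_of_le_of_lt (Valued.v.map_sub _ _) (max_lt ?_ ?_)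
      · exact hB1 j i (le_trans (le_max_left _ _) hj) (le_trans (le_max_left _ _) hi)
      · exact hQ (j, i) (Prod.mk_le_mk.2
          ⟨le_trans (le_trans (le_max_left _ _) (le_max_right _ _)) hj,
           le_trans (le_trans (le_max_right _ _) (le_max_right _ _)) hi⟩)
    exact cauchySeq_tendsto_of_complete hcs
  choose l hl using key
  set L : WittVector p F := WittVector.mk p l with hLdef
  have hLcoeff : L.coeff = l := WittVector.coeff_mk (p := p) l
  -- Step 3: approximation property
  have happrox : ∀ ε : ℝ≥0∞, 0 < ε → ∃ N : ℕ, ∀ i, N ≤ i →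
      gaussNorm p F r (x i - L) < ε := by
    intro ε hε
    obtain ⟨ε', hε'0, hε'ε⟩ := exists_between hε
    obtain ⟨N, hN⟩ := hcauchy ε' hε'0
    refine ⟨N, fun i hi => lt_of_le_of_lt ?_ hε'ε⟩
    rw [gaussNorm]
    apply iSup_le
    intro n
    rw [GaussAux.term_le_iff hr]
    set δ : ℝ≥0∞ := (ε' * (p : ℝ≥0∞) ^ n) ^ (((p : ℝ) ^ n) / r) with hδ
    have hδt : δ ≠ ⊤ := by
      apply ENNReal.rpow_ne_top_of_nonneg
      · have hppos : (0 : ℝ) < (p : ℝ) := by exact_mod_cast hp'.out.pos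
        positivity
      · exact ENNReal.mul_ne_top hε'ε.ne_top (ENNReal.pow_ne_top hpt)
    have htend : Tendsto (fun j => (x i - x j).coeff n) atTop
        (nhds ((x i - L).coeff n)) := by
      have h1 : ∀ j, (x i - x j).coeff n
          = aeval (Function.uncurry ![(x i).coeff, (x j).coeff])
            (WittVector.wittSub p n) := by
        intro j; rw [WittVector.sub_coeff]; rfl
      have h2 : (x i - L).coeff n
          = aeval (Function.uncurry ![(x i).coeff, L.coeff]) (WittVector.wittSub p n) := by
        rw [WittVector.sub_coeff]; rfl
      simp only [h1, h2]
      apply GaussAux.tendsto_aeval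
      rintro ⟨b, m⟩ -
      fin_cases b
      · exact tendsto_const_nhds
      · show Tendsto (fun j => (x j).coeff m) atTop (nhds (L.coeff m))
        rw [hLcoeff]
        exact hl m
    have hub : ∀ᶠ j in atTop, Valued.v ((x i - x j).coeff n) ≤ δ.toNNReal := by
      rw [eventually_atTop]
      refine ⟨N, fun j hj => ?_⟩
      have h1 : ((p : ℝ≥0∞)⁻¹ ^ n) * (((Valued.v ((x i - x j).coeff n) : ℝ≥0) : ℝ≥0∞)
          ^ (r * ((p : ℝ)⁻¹ ^ n))) ≤ ε' :=
        le_trans (GaussAux.le_gaussNorm _ n) (hN i j hi hj).le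
      have h3 := (GaussAux.term_le_iff (p := p) hr ε' ((x i - x j).coeff n) n).1 h1
      rw [← hδ, ← ENNReal.coe_toNNReal hδt] at h3
      exact_mod_cast h3
    have h4 := GaussAux.val_le_of_tendsto htend hub
    calc ((Valued.v ((x i - L).coeff n) : ℝ≥0) : ℝ≥0∞)
        ≤ ((δ.toNNReal : ℝ≥0) : ℝ≥0∞) := by exact_mod_cast h4
      _ = δ := ENNReal.coe_toNNReal hδt
  -- Step 4: finiteness of the limit's norm
  obtain ⟨N0, hN0⟩ := happrox 1 zero_lt_one
  refine ⟨L, ?_, happrox⟩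
  have h5 := GaussAux.gaussNorm_sub_le hr (x N0) (x N0 - L)
  have h6 : x N0 - (x N0 - L) = L := by ring
  rw [h6] at h5
  have h7 : max (gaussNorm p F r (x N0)) (gaussNorm p F r (x N0 - L)) ≠ ⊤ := by
    rw [Ne, max_eq_top]
    push_neg
    exact ⟨hfin N0, (hN0 N0 le_rfl).ne_top⟩
  exact ne_top_of_le_ne_top h7 h5
end
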